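/- arXiv:2209.14938 — 6 statements merged into one kernel-verified Lean document; each statement's English description precedes it below -/
import Mathlib

section
/- Let T be a tree of transitive tournaments (a connected DAG whose skeleton is a block graph) with a unique source. Then for any two distinct nodes i, j, the sets Desc(i) and Desc(j) are either disjoint, or one contains the other (equivalently, i is an ancestor of j or j is an ancestor of i). -/
open scoped Classical

universe u

variable {V : Type u}

/-- The undirected skeleton of a directed graph given by edge relation `E`. -/
def skeleton (E : V → V → Prop) : SimpleGraph V where
  Adj u v := u ≠ v ∧ (E u v ∨ E v u)
  symm := ⟨fun u v h => ⟨h.1.symm, h.2.symm⟩⟩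
  loopless := ⟨fun v h => h.1 rfl⟩

/-- A set of vertices is biconnected if the induced subgraph is connected and
remains connected after removal of any single vertex. -/
def IsBiconnected (G : SimpleGraph V) (S : Set V) : Prop :=
  (G.induce S).Connected ∧ ∀ v ∈ S, (G.induce (S \ {v})).Connected

/-- A block graph: every maximal biconnected set of vertices is a clique. -/
def IsBlockGraph (G : SimpleGraph V) : Prop :=
  ∀ S : Set V, IsBiconnected G S →
    (∀ S', S ⊆ S' → IsBiconnected G S' → S = S') → G.IsClique S

/-- A tree of transitive tournaments: a (finite) directed acyclic graph that is
connected and whose skeleton is a block graph. -/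
def IsTTT (E : V → V → Prop) : Prop :=
  (∀ v, ¬ Relation.TransGen E v v) ∧ (skeleton E).Connected ∧ IsBlockGraph (skeleton E)

/-- `l` is the full vertex sequence of a directed path from `a` to `b`. -/
def IsDirSeq (E : V → V → Prop) (a b : V) (l : List V) : Prop :=
  l.Chain' E ∧ l.head? = some a ∧ l.getLast? = some b

/-- A maximal clique of a simple graph. -/
def IsMaxClique (G : SimpleGraph V) (S : Set V) : Prop :=
  G.IsClique S ∧ ∀ S', G.IsClique S' → S ⊆ S' → S = S'

/-- The product of the edge weights along a vertex sequence. -/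
def prodAlong (c : V → V → ℝ) : List V → ℝ
  | [] => 1
  | [_] => 1
  | a :: b :: rest => c a b * prodAlong c (b :: rest)


/-- reachability within a vertex set -/
def ReachOn (G : SimpleGraph V) (S : Set V) : V → V → Prop :=
  Relation.ReflTransGen (fun x y => x ∈ S ∧ y ∈ S ∧ G.Adj x y)

lemma ReachOn.mono {G : SimpleGraph V} {S T : Set V} (hST : S ⊆ T) {x y : V}
    (h : ReachOn G S x y) : ReachOn G T x y :=
  Relation.ReflTransGen.mono (fun a b hab => ⟨hST hab.1, hST hab.2.1, hab.2.2⟩) _ _ h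

lemma ReachOn.mem_of_ne {G : SimpleGraph V} {S : Set V} {x y : V}
    (h : ReachOn G S x y) (hne : x ≠ y) : y ∈ S := by
  rcases h.cases_tail with h' | ⟨c, _, hc⟩
  · exact absurd h'.symm hne
  · exact hc.2.1

lemma reachOn_reachable {G : SimpleGraph V} {S : Set V} {x : V} (hx : x ∈ S) :
    ∀ {y}, ReachOn G S x y → ∀ (hy : y ∈ S),
      (G.induce S).Reachable ⟨x, hx⟩ ⟨y, hy⟩ := by
  intro y h
  induction h with
  | refl => intro hy; exact SimpleGraph.Reachable.refl _
  | tail hab hbc ih =>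
    intro hy
    exact (ih hbc.1).trans (SimpleGraph.Adj.reachable (by exact hbc.2.2))

lemma connected_of_reachOn {G : SimpleGraph V} {S : Set V} {z : V} (hz : z ∈ S)
    (hall : ∀ u ∈ S, ReachOn G S u z) : (G.induce S).Connected := by
  rw [SimpleGraph.connected_iff]
  refine ⟨?_, ⟨⟨z, hz⟩⟩⟩
  rintro ⟨u, hu⟩ ⟨w, hw⟩
  exact (reachOn_reachable hu (hall u hu) hz).trans
    (reachOn_reachable hw (hall w hw) hz).symm

lemma reachOn_support_end {G : SimpleGraph V} {a b : V} (p : G.Walk a b) :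
    ∀ u ∈ p.support, ReachOn G {x | x ∈ p.support} u b := by
  induction p with
  | nil =>
    intro u hu
    simp only [SimpleGraph.Walk.support_nil, List.mem_singleton] at hu
    subst hu; exact Relation.ReflTransGen.refl
  | @cons a c b h q ih =>
    intro u hu
    have hsub : {x | x ∈ q.support} ⊆ {x | x ∈ (SimpleGraph.Walk.cons h q).support} := by
      intro x hx
      simp only [Set.mem_setOf_eq, SimpleGraph.Walk.support_cons, List.mem_cons] at *
      exact Or.inr hx
    rw [SimpleGraph.Walk.support_cons, List.mem_cons] at hu
    rcases hu with rfl | hu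
    · refine Relation.ReflTransGen.head ⟨?_, ?_, h⟩
        ((ih c q.start_mem_support).mono hsub)
      · simp [SimpleGraph.Walk.support_cons]
      · exact hsub q.start_mem_support
    · exact (ih u hu).mono hsub

lemma reachOn_avoid {G : SimpleGraph V} {a b : V} (p : G.Walk a b) (hp : p.IsPath) (v : V) :
    ∀ u ∈ p.support, u ≠ v →
      ReachOn G {x | x ∈ p.support ∧ x ≠ v} u a ∨
      ReachOn G {x | x ∈ p.support ∧ x ≠ v} u b := by
  induction p with
  | nil =>
    intro u hu _
    simp only [SimpleGraph.Walk.support_nil, List.mem_singleton] at hu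
    subst hu; exact Or.inl Relation.ReflTransGen.refl
  | @cons a c b h q ih =>
    rw [SimpleGraph.Walk.cons_isPath_iff] at hp
    intro u hu hune
    rw [SimpleGraph.Walk.support_cons, List.mem_cons] at hu
    have hsub : {x | x ∈ q.support ∧ x ≠ v} ⊆
        {x | x ∈ (SimpleGraph.Walk.cons h q).support ∧ x ≠ v} := by
      intro x hx
      exact ⟨by simp [SimpleGraph.Walk.support_cons, hx.1], hx.2⟩
    rcases hu with rfl | hu
    · exact Or.inl Relation.ReflTransGen.refl
    · rcases ih hp.1 u hu hune with hc | hb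
      · by_cases hav : a = v
        · subst hav
          -- a ∉ q.support, so everything in q.support differs from a=v
          have hsub2 : {x | x ∈ q.support} ⊆
              {x | x ∈ (SimpleGraph.Walk.cons h q).support ∧ x ≠ a} := by
            intro x hx
            refine ⟨by rw [SimpleGraph.Walk.support_cons, List.mem_cons]; exact Or.inr hx, ?_⟩
            rintro rfl; exact hp.2 hx
          exact Or.inr ((hc.mono hsub).trans
            ((reachOn_support_end q c q.start_mem_support).mono hsub2))
        · have hcv : c ≠ v := by
            by_cases huc : u = c
            · subst huc; exact hune
            · exact (hc.mem_of_ne huc).2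
          refine Or.inl ((hc.mono hsub).tail ⟨?_, ?_, h.symm⟩)
          · exact ⟨by simp [SimpleGraph.Walk.support_cons, q.start_mem_support], hcv⟩
          · exact ⟨by simp [SimpleGraph.Walk.support_cons], hav⟩
      · exact Or.inr (hb.mono hsub)


lemma ReachOn.trans {G : SimpleGraph V} {S : Set V} {x y z : V}
    (h : ReachOn G S x y) (h' : ReachOn G S y z) : ReachOn G S x z :=
  Relation.ReflTransGen.trans h h'

lemma rtg_antisymm {E : V → V → Prop} (hac : ∀ v, ¬ Relation.TransGen E v v) {a b : V}
    (h1 : Relation.ReflTransGen E a b) (h2 : Relation.ReflTransGen E b a) : a = b := by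
  rcases h1.cases_head with h | ⟨c, hc, hcb⟩
  · exact h
  · exact (hac b (Relation.TransGen.trans_right h2 (Relation.TransGen.head' hc hcb))).elim

lemma exists_source_le [Fintype V] {E : V → V → Prop}
    (hac : ∀ v, ¬ Relation.TransGen E v v) (v : V) :
    ∃ u, (∀ w, ¬ E w u) ∧ Relation.ReflTransGen E u v := by
  haveI : IsTrans V (Relation.TransGen E) := ⟨fun _ _ _ => Relation.TransGen.trans⟩
  haveI : IsIrrefl V (Relation.TransGen E) := ⟨hac⟩
  refine (Finite.wellFounded_of_trans_of_irrefl (Relation.TransGen E)).induction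
    (C := fun v => ∃ u, (∀ w, ¬ E w u) ∧ Relation.ReflTransGen E u v) v ?_
  intro x ih
  by_cases h : ∃ p, E p x
  · obtain ⟨p, hp⟩ := h
    obtain ⟨u, hu1, hu2⟩ := ih p (Relation.TransGen.single hp)
    exact ⟨u, hu1, hu2.tail hp⟩
  · push_neg at h
    exact ⟨x, h, Relation.ReflTransGen.refl⟩

lemma exists_maximal_bicon [Fintype V] {G : SimpleGraph V} {S : Set V}
    (hS : IsBiconnected G S) :
    ∃ S' : Set V, S ⊆ S' ∧ IsBiconnected G S' ∧
      ∀ S'', S' ⊆ S'' → IsBiconnected G S'' → S' = S'' := by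
  classical
  let A : Finset (Finset V) :=
    Finset.univ.filter (fun T => S ⊆ ↑T ∧ IsBiconnected G ↑T)
  have hmem : S.toFinset ∈ A := by
    simp only [A, Finset.mem_filter, Finset.mem_univ, true_and, Set.coe_toFinset]
    exact ⟨subset_rfl, hS⟩
  obtain ⟨T, hTA, hmax⟩ := A.exists_max_image (fun T => T.card) ⟨S.toFinset, hmem⟩
  simp only [A, Finset.mem_filter, Finset.mem_univ, true_and] at hTA
  refine ⟨↑T, hTA.1, hTA.2, ?_⟩
  intro S'' hsub hb
  have hmem2 : S''.toFinset ∈ A := by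
    simp only [A, Finset.mem_filter, Finset.mem_univ, true_and, Set.coe_toFinset]
    exact ⟨hTA.1.trans hsub, hb⟩
  have hcard := hmax _ hmem2
  have hTsub : T ⊆ S''.toFinset := by
    intro x hx
    rw [Set.mem_toFinset]
    exact hsub hx
  have := Finset.eq_of_subset_of_card_le hTsub hcard
  rw [this, Set.coe_toFinset]

lemma walk_of_rtg {E : V → V → Prop} (hac : ∀ v, ¬ Relation.TransGen E v v) {a b : V}
    (h : Relation.ReflTransGen E a b) :
    ∃ p : (skeleton E).Walk a b, ∀ x ∈ p.support,
      Relation.ReflTransGen E a x ∧ Relation.ReflTransGen E x b := by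
  induction h using Relation.ReflTransGen.head_induction_on with
  | refl =>
    exact ⟨SimpleGraph.Walk.nil, by
      intro x hx
      simp only [SimpleGraph.Walk.support_nil, List.mem_singleton] at hx
      subst hx
      exact ⟨Relation.ReflTransGen.refl, Relation.ReflTransGen.refl⟩⟩
  | head hstep hrtg ih =>
    rename_i a' c'
    obtain ⟨p, hp⟩ := ih
    have hne : a' ≠ c' := by
      rintro rfl
      exact hac a' (Relation.TransGen.single hstep)
    refine ⟨SimpleGraph.Walk.cons (show (skeleton E).Adj a' c' from ⟨hne, Or.inl hstep⟩) p, ?_⟩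
    intro x hx
    rw [SimpleGraph.Walk.support_cons, List.mem_cons] at hx
    rcases hx with rfl | hx
    · exact ⟨Relation.ReflTransGen.refl, Relation.ReflTransGen.head hstep hrtg⟩
    · exact ⟨Relation.ReflTransGen.head hstep (hp x hx).1, (hp x hx).2⟩

lemma ttt_comparable [Fintype V] {E : V → V → Prop} (httt : IsTTT E)
    (hsrc : ∃! u : V, ∀ w, ¬ E w u) {i j w : V}
    (hiw : Relation.ReflTransGen E i w) (hjw : Relation.ReflTransGen E j w) :
    Relation.ReflTransGen E i j ∨ Relation.ReflTransGen E j i := by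
  by_contra hcon
  push_neg at hcon
  obtain ⟨hij, hji⟩ := hcon
  obtain ⟨hac, -, hblock⟩ := httt
  have hne : i ≠ j := by rintro rfl; exact hij Relation.ReflTransGen.refl
  obtain ⟨s, -, hs_uniq⟩ := hsrc
  have hs : ∀ v, Relation.ReflTransGen E s v := by
    intro v
    obtain ⟨u, hu1, hu2⟩ := exists_source_le hac v
    rwa [hs_uniq u hu1] at hu2
  obtain ⟨pA, hpA⟩ := walk_of_rtg hac hiw
  obtain ⟨pB, hpB⟩ := walk_of_rtg hac hjw
  obtain ⟨pC, hpC⟩ := walk_of_rtg hac (hs i)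
  obtain ⟨pD, hpD⟩ := walk_of_rtg hac (hs j)
  set p1 : (skeleton E).Walk i j := (pA.append pB.reverse).bypass with hp1def
  set p2 : (skeleton E).Walk i j := (pC.reverse.append pD).bypass with hp2def
  have hp1 : p1.IsPath := SimpleGraph.Walk.bypass_isPath _
  have hp2 : p2.IsPath := SimpleGraph.Walk.bypass_isPath _
  have hm1 : ∀ x ∈ p1.support,
      Relation.ReflTransGen E i x ∨ Relation.ReflTransGen E j x := by
    intro x hx
    have h := SimpleGraph.Walk.support_bypass_subset _ hx
    rw [SimpleGraph.Walk.mem_support_append_iff] at h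
    rcases h with h | h
    · exact Or.inl (hpA x h).1
    · rw [SimpleGraph.Walk.support_reverse, List.mem_reverse] at h
      exact Or.inr (hpB x h).1
  have hm2 : ∀ x ∈ p2.support,
      Relation.ReflTransGen E x i ∨ Relation.ReflTransGen E x j := by
    intro x hx
    have h := SimpleGraph.Walk.support_bypass_subset _ hx
    rw [SimpleGraph.Walk.mem_support_append_iff] at h
    rcases h with h | h
    · rw [SimpleGraph.Walk.support_reverse, List.mem_reverse] at h
      exact Or.inl (hpC x h).2
    · exact Or.inr (hpD x h).2
  have hdisj : ∀ x, x ∈ p1.support → x ∈ p2.support → x = i ∨ x = j := by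
    intro x h1 h2
    rcases hm1 x h1 with hi' | hj' <;> rcases hm2 x h2 with hi'' | hj''
    · exact Or.inl (rtg_antisymm hac hi' hi'').symm
    · exact absurd (hi'.trans hj'') hij
    · exact absurd (hj'.trans hi'') hji
    · exact Or.inr (rtg_antisymm hac hj' hj'').symm
  set S : Set V := {x | x ∈ p1.support ∨ x ∈ p2.support} with hSdef
  have hsub1 : {x | x ∈ p1.support} ⊆ S := fun x hx => Or.inl hx
  have hsub2 : {x | x ∈ p2.support} ⊆ S := fun x hx => Or.inr hx
  have hiS : i ∈ S := Or.inl p1.start_mem_support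
  have hjS : j ∈ S := Or.inl p1.end_mem_support
  -- the two "avoid v" subsets sit inside S \ {v}
  have havoid1 : ∀ v : V, {x | x ∈ p1.support ∧ x ≠ v} ⊆ S \ {v} := by
    intro v x hx
    exact ⟨Or.inl hx.1, hx.2⟩
  have havoid2 : ∀ v : V, {x | x ∈ p2.support ∧ x ≠ v} ⊆ S \ {v} := by
    intro v x hx
    exact ⟨Or.inr hx.1, hx.2⟩
  have hfull1 : ∀ v : V, v ∉ p1.support → {x | x ∈ p1.support} ⊆ S \ {v} := by
    intro v hv x hx
    exact ⟨Or.inl hx, fun h => hv (h ▸ hx)⟩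
  have hfull2 : ∀ v : V, v ∉ p2.support → {x | x ∈ p2.support} ⊆ S \ {v} := by
    intro v hv x hx
    exact ⟨Or.inr hx, fun h => hv (h ▸ hx)⟩
  -- reach-to-endpoint helpers avoiding v, when endpoint z survives
  have hreach1 : ∀ (v : V), v ≠ i → v ≠ j → ∀ u ∈ p1.support, u ≠ v →
      ReachOn (skeleton E) (S \ {v}) u i ∨ ReachOn (skeleton E) (S \ {v}) u j := by
    intro v _ _ u hu huv
    rcases reachOn_avoid p1 hp1 v u hu huv with h | h
    · exact Or.inl (h.mono (havoid1 v))
    · exact Or.inr (h.mono (havoid1 v))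
  have hreach2 : ∀ (v : V), ∀ u ∈ p2.support, u ≠ v →
      ReachOn (skeleton E) (S \ {v}) u i ∨ ReachOn (skeleton E) (S \ {v}) u j := by
    intro v u hu huv
    rcases reachOn_avoid p2 hp2 v u hu huv with h | h
    · exact Or.inl (h.mono (havoid2 v))
    · exact Or.inr (h.mono (havoid2 v))
  have hbicon : IsBiconnected (skeleton E) S := by
    constructor
    · refine connected_of_reachOn hjS ?_
      intro u hu
      rcases hu with h | h
      · exact (reachOn_support_end p1 u h).mono hsub1
      · exact (reachOn_support_end p2 u h).mono hsub2
    · intro v hv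
      by_cases hvi : v = i
      · subst hvi
        -- target j; no one can reach v since v ∉ S \ {v}
        refine connected_of_reachOn (z := j) ⟨hjS, hne.symm⟩ ?_
        intro u hu
        obtain ⟨huS, huv⟩ := hu
        have huv : u ≠ v := huv
        have hiT : v ∉ S \ {v} := fun h => h.2 rfl
        rcases huS with h | h
        · rcases reachOn_avoid p1 hp1 v u h huv with h' | h'
          · exact absurd ((h'.mono (havoid1 v)).mem_of_ne huv) hiT
          · exact (h'.mono (havoid1 v))
        · rcases reachOn_avoid p2 hp2 v u h huv with h' | h'
          · exact absurd ((h'.mono (havoid2 v)).mem_of_ne huv) hiT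
          · exact (h'.mono (havoid2 v))
      · by_cases hvj : v = j
        · subst hvj
          refine connected_of_reachOn (z := i) ⟨hiS, hne⟩ ?_
          intro u hu
          obtain ⟨huS, huv⟩ := hu
          have huv : u ≠ v := huv
          have hjT : v ∉ S \ {v} := fun h => h.2 rfl
          rcases huS with h | h
          · rcases reachOn_avoid p1 hp1 v u h huv with h' | h'
            · exact (h'.mono (havoid1 v))
            · exact absurd ((h'.mono (havoid1 v)).mem_of_ne huv) hjT
          · rcases reachOn_avoid p2 hp2 v u h huv with h' | h'
            · exact (h'.mono (havoid2 v))
            · exact absurd ((h'.mono (havoid2 v)).mem_of_ne huv) hjT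
        · -- v is internal: it is in exactly one of the supports
          have hjmem : j ∈ S \ {v} := ⟨hjS, fun h => hvj h.symm⟩
          refine connected_of_reachOn (z := j) hjmem ?_
          intro u hu
          obtain ⟨huS, huv⟩ := hu
          have huv : u ≠ v := huv
          -- i reaches j within S \ {v}
          have hij_reach : ReachOn (skeleton E) (S \ {v}) i j := by
            by_cases hv1 : v ∈ p1.support
            · have hv2 : v ∉ p2.support := by
                intro hv2
                rcases hdisj v hv1 hv2 with rfl | rfl
                · exact hvi rfl
                · exact hvj rfl
              exact (reachOn_support_end p2 i p2.start_mem_support).mono (hfull2 v hv2)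
            · exact (reachOn_support_end p1 i p1.start_mem_support).mono (hfull1 v hv1)
          rcases huS with h | h
          · by_cases hv1 : v ∈ p1.support
            · rcases hreach1 v hvi hvj u h huv with h' | h'
              · exact h'.trans hij_reach
              · exact h'
            · exact (reachOn_support_end p1 u h).mono (hfull1 v hv1)
          · rcases hreach2 v u h huv with h' | h'
            · exact h'.trans hij_reach
            · exact h'
  obtain ⟨S', hSS', hb', hmax'⟩ := exists_maximal_bicon hbicon
  have hclique := hblock S' hb' hmax'
  have hadj : (skeleton E).Adj i j := hclique (hSS' hiS) (hSS' hjS) hne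
  rcases hadj.2 with h | h
  · exact hij (Relation.ReflTransGen.single h)
  · exact hji (Relation.ReflTransGen.single h)


/-- In a ttt with unique source, closed descendant sets of distinct nodes are
either disjoint or nested. -/
theorem stmt6 {V : Type u} [Fintype V] (E : V → V → Prop)
    (httt : IsTTT E) (hsrc : ∃! u : V, ∀ w, ¬ E w u) :
    ∀ i j : V, i ≠ j →
      Disjoint {w | Relation.ReflTransGen E i w} {w | Relation.ReflTransGen E j w} ∨
      {w | Relation.ReflTransGen E i w} ⊆ {w | Relation.ReflTransGen E j w} ∨
      {w | Relation.ReflTransGen E j w} ⊆ {w | Relation.ReflTransGen E i w} := by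
  intro i j hne
  by_cases hd : Disjoint {w | Relation.ReflTransGen E i w} {w | Relation.ReflTransGen E j w}
  · exact Or.inl hd
  · right
    rw [Set.not_disjoint_iff] at hd
    obtain ⟨w, hwi, hwj⟩ := hd
    rcases ttt_comparable httt hsrc hwi hwj with h | h
    · exact Or.inr (fun x hx => h.trans hx)
    · exact Or.inl (fun x hx => h.trans hx)
end

section
/- A tree of transitive tournaments has a unique source if and only if it contains no v-structure, i.e., no node having two non-adjacent parents. -/
open scoped Classical

universe u

variable {V : Type u}

open SimpleGraph

/-- Walking inside a set yields reachability in the induced graph. -/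
lemma induce_reach {G : SimpleGraph V} {S : Set V} :
    ∀ {x y : V} (p : G.Walk x y), (∀ z ∈ p.support, z ∈ S) →
      ∀ (hx : x ∈ S) (hy : y ∈ S), (G.induce S).Reachable ⟨x, hx⟩ ⟨y, hy⟩ := by
  intro x y p
  induction p with
  | nil => exact fun _ hx hy => Reachable.refl _
  | @cons x z y hadj q ih =>
    intro h hx hy
    have hz : z ∈ S := h z (by simp)
    have e : (G.induce S).Adj ⟨x, hx⟩ ⟨z, hz⟩ := hadj
    exact e.reachable.trans (ih (fun z' hz' => h z' (by simp [hz'])) hz hy)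

lemma avoid1 {G : SimpleGraph V} {a w : V} {p : G.Walk a w} (hp : p.IsPath)
    {x : V} (hx : x ∈ p.support) (hxw : x ≠ w) : w ∉ (p.takeUntil x hx).support := by
  have hnd : ((p.takeUntil x hx).support ++ (p.dropUntil x hx).support.tail).Nodup := by
    rw [← Walk.support_append, p.take_spec hx]; exact hp.support_nodup
  have hw2 : w ∈ (p.dropUntil x hx).support.tail := by
    have h1 : w ∈ (p.dropUntil x hx).support := Walk.end_mem_support _
    rw [(p.dropUntil x hx).support_eq_cons] at h1
    rcases List.mem_cons.mp h1 with h1 | h1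
    · exact absurd h1.symm hxw
    · exact h1
  intro hcon
  exact (List.disjoint_of_nodup_append hnd) hcon hw2

lemma avoid2 {G : SimpleGraph V} {w b : V} {p : G.Walk w b} (hp : p.IsPath)
    {x : V} (hx : x ∈ p.support) (hxw : x ≠ w) : w ∉ (p.dropUntil x hx).support := by
  have hnd : ((p.takeUntil x hx).support ++ (p.dropUntil x hx).support.tail).Nodup := by
    rw [← Walk.support_append, p.take_spec hx]; exact hp.support_nodup
  have hw1 : w ∈ (p.takeUntil x hx).support := Walk.start_mem_support _
  intro hcon
  rw [(p.dropUntil x hx).support_eq_cons] at hcon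
  rcases List.mem_cons.mp hcon with h | h
  · exact hxw h.symm
  · exact (List.disjoint_of_nodup_append hnd) hw1 h

/-- The vertex set of a cycle formed by a path from `a` to `b` avoiding `v`, together
with edges `a—v` and `b—v`, is biconnected. -/
lemma biconn {G : SimpleGraph V} {a b v : V} (hav : G.Adj a v) (hbv : G.Adj b v)
    {p : G.Walk a b} (hp : p.IsPath) (hvp : v ∉ p.support) :
    IsBiconnected G (insert v {x | x ∈ p.support}) := by
  set S : Set V := insert v {x | x ∈ p.support} with hSdef
  have hvS : v ∈ S := Set.mem_insert _ _
  have hsub : ∀ z ∈ p.support, z ∈ S := fun z hz => Set.mem_insert_of_mem _ hz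
  have haS : a ∈ S := hsub a p.start_mem_support
  have hbS : b ∈ S := hsub b p.end_mem_support
  constructor
  · rw [SimpleGraph.connected_iff]
    refine ⟨?_, ⟨⟨v, hvS⟩⟩⟩
    have key : ∀ x : S, (G.induce S).Reachable x ⟨v, hvS⟩ := by
      rintro ⟨x, hx⟩
      rw [hSdef, Set.mem_insert_iff] at hx
      rcases hx with rfl | hx
      · exact Reachable.refl _
      · have hr := induce_reach (p.takeUntil x hx)
          (fun z hz => hsub z (p.support_takeUntil_subset hx hz)) haS (hsub x hx)
        exact hr.symm.trans ((show (G.induce S).Adj ⟨a, haS⟩ ⟨v, hvS⟩ from hav).reachable)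
    exact fun x y => (key x).trans (key y).symm
  · intro w hw
    rw [SimpleGraph.connected_iff]
    by_cases hwv : w = v
    · subst hwv
      have hsub' : ∀ z ∈ p.support, z ∈ S \ {w} := fun z hz =>
        ⟨hsub z hz, fun h => hvp (by rwa [Set.mem_singleton_iff.mp h] at hz)⟩
      refine ⟨?_, ⟨⟨a, hsub' a p.start_mem_support⟩⟩⟩
      have key : ∀ x : ↥(S \ {w}), (G.induce (S \ {w})).Reachable x
          ⟨a, hsub' a p.start_mem_support⟩ := by
        rintro ⟨x, hx⟩
        have hxp : x ∈ p.support := by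
          rcases hx with ⟨hx1, hx2⟩
          rw [hSdef, Set.mem_insert_iff] at hx1
          rcases hx1 with rfl | hx1
          · exact absurd rfl hx2
          · exact hx1
        exact (induce_reach (p.takeUntil x hxp)
          (fun z hz => hsub' z (p.support_takeUntil_subset hxp hz))
          (hsub' a p.start_mem_support) (hsub' x hxp)).symm
      exact fun x y => (key x).trans (key y).symm
    · have hwp : w ∈ p.support := by
        rw [hSdef, Set.mem_insert_iff] at hw
        rcases hw with rfl | h
        · exact absurd rfl hwv
        · exact h
      have hvS' : v ∈ S \ {w} := ⟨hvS, fun h => hwv (Set.mem_singleton_iff.mp h).symm⟩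
      refine ⟨?_, ⟨⟨v, hvS'⟩⟩⟩
      have key : ∀ x : ↥(S \ {w}), (G.induce (S \ {w})).Reachable x ⟨v, hvS'⟩ := by
        rintro ⟨x, hx⟩
        obtain ⟨hxS, hxw'⟩ := hx
        have hxw : x ≠ w := fun h => hxw' (Set.mem_singleton_iff.mpr h)
        rw [hSdef, Set.mem_insert_iff] at hxS
        rcases hxS with rfl | hxp
        · exact Reachable.refl _
        · have hx2 : x ∈ (p.takeUntil w hwp).support ∨ x ∈ (p.dropUntil w hwp).support := by
            rw [← Walk.mem_support_append_iff, p.take_spec hwp]; exact hxp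
          have hxS' : x ∈ S \ {w} :=
            ⟨hsub x hxp, fun h => hxw (Set.mem_singleton_iff.mp h)⟩
          rcases hx2 with hx1 | hx1
          · have hq1 : (p.takeUntil w hwp).IsPath := hp.takeUntil _
            have hwr : w ∉ ((p.takeUntil w hwp).takeUntil x hx1).support := avoid1 hq1 hx1 hxw
            have hsup : ∀ z ∈ ((p.takeUntil w hwp).takeUntil x hx1).support, z ∈ S \ {w} :=
              fun z hz =>
                ⟨hsub z (p.support_takeUntil_subset hwp
                    ((p.takeUntil w hwp).support_takeUntil_subset hx1 hz)),
                 fun h => hwr (by rwa [Set.mem_singleton_iff.mp h] at hz)⟩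
            have haS' : a ∈ S \ {w} := hsup a (Walk.start_mem_support _)
            have hr := induce_reach ((p.takeUntil w hwp).takeUntil x hx1) hsup haS' hxS'
            exact hr.symm.trans
              ((show (G.induce (S \ {w})).Adj ⟨a, haS'⟩ ⟨v, hvS'⟩ from hav).reachable)
          · have hq2 : (p.dropUntil w hwp).IsPath := hp.dropUntil _
            have hwr : w ∉ ((p.dropUntil w hwp).dropUntil x hx1).support := avoid2 hq2 hx1 hxw
            have hsup : ∀ z ∈ ((p.dropUntil w hwp).dropUntil x hx1).support, z ∈ S \ {w} :=
              fun z hz =>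
                ⟨hsub z (p.support_dropUntil_subset hwp
                    ((p.dropUntil w hwp).support_dropUntil_subset hx1 hz)),
                 fun h => hwr (by rwa [Set.mem_singleton_iff.mp h] at hz)⟩
            have hbS' : b ∈ S \ {w} := hsup b (Walk.end_mem_support _)
            have hr := induce_reach ((p.dropUntil w hwp).dropUntil x hx1) hsup hxS' hbS'
            exact hr.trans
              ((show (G.induce (S \ {w})).Adj ⟨b, hbS'⟩ ⟨v, hvS'⟩ from hbv).reachable)
      exact fun x y => (key x).trans (key y).symm

/-- In a block graph, two neighbors of `v` joined by a path avoiding `v` are adjacent. -/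
lemma cut_adj [Fintype V] {G : SimpleGraph V} (hbg : IsBlockGraph G) {a b v : V}
    (hav : G.Adj a v) (hbv : G.Adj b v) (hab : a ≠ b)
    (p : G.Walk a b) (hp : p.IsPath) (hv : v ∉ p.support) : G.Adj a b := by
  have hbic := biconn hav hbv hp hv
  obtain ⟨M, hM, hmax⟩ := Set.Finite.exists_maximalFor id
    {T : Set V | insert v {x | x ∈ p.support} ⊆ T ∧ IsBiconnected G T}
    (Set.toFinite _) ⟨_, subset_rfl, hbic⟩
  have hMmax : ∀ T, M ⊆ T → IsBiconnected G T → M = T := fun T hMT hT =>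
    hMT.antisymm (hmax ⟨hM.1.trans hMT, hT⟩ hMT)
  have hcl := hbg M hM.2 hMmax
  exact hcl (hM.1 (Set.mem_insert_of_mem _ p.start_mem_support))
    (hM.1 (Set.mem_insert_of_mem _ p.end_mem_support)) hab

lemma exists_source_above [Fintype V] (E : V → V → Prop)
    (hac : ∀ v, ¬ Relation.TransGen E v v) (a : V) :
    ∃ u : V, (∀ w, ¬ E w u) ∧ Relation.ReflTransGen E u a := by
  haveI : IsTrans V (Relation.TransGen E) := ⟨fun _ _ _ => Relation.TransGen.trans⟩
  haveI : IsIrrefl V (Relation.TransGen E) := ⟨hac⟩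
  have hwf := Finite.wellFounded_of_trans_of_irrefl (Relation.TransGen E)
  obtain ⟨u, hu, hmin⟩ := hwf.has_min {x | Relation.ReflTransGen E x a}
    ⟨a, Relation.ReflTransGen.refl⟩
  exact ⟨u, fun w hw => hmin w (Relation.ReflTransGen.head hw hu)
    (Relation.TransGen.single hw), hu⟩

lemma reach_walk {E : V → V → Prop} (hac : ∀ v, ¬ Relation.TransGen E v v) {u a : V}
    (h : Relation.ReflTransGen E u a) :
    ∃ w : (skeleton E).Walk u a, ∀ x ∈ w.support, Relation.ReflTransGen E x a := by
  induction h using Relation.ReflTransGen.head_induction_on with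
  | refl =>
    refine ⟨Walk.nil, ?_⟩
    intro x hx
    simp only [Walk.support_nil, List.mem_singleton] at hx
    subst hx
    exact Relation.ReflTransGen.refl
  | head hstep hrest ih =>
    obtain ⟨w, hw⟩ := ih
    have hadj : (skeleton E).Adj _ _ :=
      ⟨fun he => hac _ (he ▸ Relation.TransGen.single hstep), Or.inl hstep⟩
    refine ⟨Walk.cons hadj w, ?_⟩
    intro x hx
    rcases List.mem_cons.mp (by simpa using hx) with rfl | hx
    · exact hrest.head hstep
    · exact hw x hx

lemma descend {E : V → V → Prop} (hac : ∀ v, ¬ Relation.TransGen E v v)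
    (hnv : ¬ ∃ v a b : V, a ≠ b ∧ E a v ∧ E b v ∧ ¬ E a b ∧ ¬ E b a)
    {u2 : V} :
    ∀ {z : V} (q : (skeleton E).Walk z u2) (_ : ∀ w, ¬ E w u2) {y : V}
      (hadj : (skeleton E).Adj y z)
      (_ : E y z) (_ : (SimpleGraph.Walk.cons hadj q).IsPath),
      ∃ p' : (skeleton E).Walk y u2, p'.length ≤ q.length := by
  intro z q
  induction q with
  | nil =>
    intro hsrc' y hadj hE hp
    exact absurd hE (hsrc' _)
  | @cons z z2 u2' h2 r ih =>
    intro hsrc' y hadj hE hp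
    rcases h2.2 with hf | hb
    · obtain ⟨p', hp'⟩ := ih hsrc' h2 hf hp.of_cons
      exact ⟨Walk.cons hadj p', by simpa using Nat.succ_le_succ hp'⟩
    · have hyz2 : y ≠ z2 := by
        have hnd := hp.support_nodup
        simp only [Walk.support_cons, List.nodup_cons] at hnd
        intro hcon
        exact hnd.1 (by rw [hcon]; exact List.mem_cons_of_mem _ r.start_mem_support)
      have hadj2 : (skeleton E).Adj y z2 := by
        refine ⟨hyz2, ?_⟩
        by_contra hcon
        push_neg at hcon
        exact hnv ⟨z, y, z2, hyz2, hE, hb, hcon.1, hcon.2⟩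
      exact ⟨Walk.cons hadj2 r, by simp⟩

lemma no_path {E : V → V → Prop} (hac : ∀ v, ¬ Relation.TransGen E v v)
    (hnv : ¬ ∃ v a b : V, a ≠ b ∧ E a v ∧ E b v ∧ ¬ E a b ∧ ¬ E b a)
    {u1 u2 : V} (h1 : ∀ w, ¬ E w u1) (h2 : ∀ w, ¬ E w u2) (hne : u1 ≠ u2) :
    ∀ n (p : (skeleton E).Walk u1 u2), p.IsPath → p.length ≤ n → False := by
  intro n
  induction n with
  | zero =>
    intro p _ hl
    cases p with
    | nil => exact hne rfl
    | cons h q => simp at hl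
  | succ n ih =>
    intro p hp hl
    cases p with
    | nil => exact hne rfl
    | cons hadj q =>
      have hE : E u1 _ := hadj.2.resolve_right fun h => h1 _ h
      obtain ⟨p', hp'⟩ := descend hac hnv q h2 hadj hE hp
      refine ih p'.bypass p'.bypass_isPath ?_
      calc p'.bypass.length ≤ p'.length := p'.length_bypass_le
        _ ≤ q.length := hp'
        _ ≤ n := by simpa using hl

/-- A ttt has a unique source iff it contains no v-structure
(no node with two non-adjacent parents). -/
theorem stmt7 {V : Type u} [Fintype V] (E : V → V → Prop)
    (httt : IsTTT E) :
    (∃! u : V, ∀ w, ¬ E w u) ↔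
      ¬ ∃ v a b : V, a ≠ b ∧ E a v ∧ E b v ∧ ¬ E a b ∧ ¬ E b a := by
  obtain ⟨hac, hconn, hbg⟩ := httt
  constructor
  · rintro ⟨u, hu, huniq⟩ ⟨v, a, b, hab, hav, hbv, hnab, hnba⟩
    obtain ⟨sa, hsa, hra⟩ := exists_source_above E hac a
    obtain ⟨sb, hsb, hrb⟩ := exists_source_above E hac b
    have h1 : sa = u := huniq sa hsa
    have h2 : sb = u := huniq sb hsb
    subst h1
    rw [h2] at hrb
    obtain ⟨w1, hw1⟩ := reach_walk hac hra
    obtain ⟨w2, hw2⟩ := reach_walk hac hrb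
    set W := w1.reverse.append w2 with hW
    have hvW : v ∉ W.support := by
      intro hv
      rw [hW, Walk.mem_support_append_iff] at hv
      rcases hv with hv | hv
      · rw [Walk.support_reverse, List.mem_reverse] at hv
        exact hac v (Relation.TransGen.trans_right (hw1 v hv) (Relation.TransGen.single hav))
      · exact hac v (Relation.TransGen.trans_right (hw2 v hv) (Relation.TransGen.single hbv))
    have hva : a ≠ v := fun h => hac a (Relation.TransGen.single (by rw [← h] at hav; exact hav))
    have hvb : b ≠ v := fun h => hac b (Relation.TransGen.single (by rw [← h] at hbv; exact hbv))
    have hadja : (skeleton E).Adj a v := ⟨hva, Or.inl hav⟩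
    have hadjb : (skeleton E).Adj b v := ⟨hvb, Or.inl hbv⟩
    have hadj := cut_adj hbg hadja hadjb hab W.bypass W.bypass_isPath
      (fun h => hvW (W.support_bypass_subset h))
    rcases hadj.2 with h | h
    · exact hnab h
    · exact hnba h
  · intro hnv
    obtain ⟨v0⟩ := hconn.nonempty
    obtain ⟨u, hu, -⟩ := exists_source_above E hac v0
    refine ⟨u, hu, fun y hy => ?_⟩
    by_contra hne
    obtain ⟨p⟩ := hconn.preconnected y u
    exact no_path hac hnv hy hu hne p.bypass.length p.bypass p.bypass_isPath le_rfl
end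

section
/- In a tree of transitive tournaments, if there exists a directed path from node a to node b, then there is a unique shortest directed path from a to b. -/
open scoped Classical

universe u

variable {V : Type u}

lemma chain'_nodup {E : V → V → Prop} (hacy : ∀ v, ¬ Relation.TransGen E v v)
    {l : List V} (h : l.Chain' E) : l.Nodup := by
  by_contra hnd
  obtain ⟨v, hv⟩ := List.exists_duplicate_iff_not_nodup.2 hnd
  have hs : [v, v].Sublist l := List.duplicate_iff_sublist.1 hv
  haveI : IsTrans V (Relation.TransGen E) := ⟨fun _ _ _ => Relation.TransGen.trans⟩
  have h2 : [v, v].Chain' (Relation.TransGen E) :=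
    (h.imp fun _ _ => Relation.TransGen.single).sublist hs
  exact hacy v (List.isChain_cons_cons.1 h2).1

lemma chain'_transGen_head_last {E : V → V → Prop} :
    ∀ (l : List V), 2 ≤ l.length → l.Chain' E → ∀ x y, l.head? = some x →
      l.getLast? = some y → Relation.TransGen E x y := by
  intro l
  induction l with
  | nil => simp
  | cons u r ih =>
    intro hlen hch x y hx hy
    match r, hch with
    | w :: r', hch =>
      have hx' : u = x := by simpa using hx
      have h1 : E u w := (List.isChain_cons_cons.1 hch).1
      rcases r' with _ | ⟨z, r''⟩
      · have : w = y := by simpa using hy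
        exact hx' ▸ this ▸ Relation.TransGen.single h1
      · have := ih (by simp) (List.isChain_cons_cons.1 hch).2 w y rfl
          (by simpa [List.getLast?] using hy)
        exact hx' ▸ Relation.TransGen.head h1 this

lemma chain'_skeleton {E : V → V → Prop} :
    ∀ {l : List V}, l.Nodup → l.Chain' E → l.Chain' (skeleton E).Adj := by
  intro l
  induction l with
  | nil => intro _ _; exact List.isChain_nil
  | cons u r ih =>
    intro hnd hch
    match r with
    | [] => exact List.isChain_singleton _
    | w :: r' =>
      refine List.isChain_cons_cons.2 ⟨⟨?_, Or.inl (List.isChain_cons_cons.1 hch).1⟩,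
        ih (List.nodup_cons.1 hnd).2 (List.isChain_cons_cons.1 hch).2⟩
      intro h
      exact (List.nodup_cons.1 hnd).1 (h ▸ (List.mem_cons_self : w ∈ w :: r'))

-- reachability in induced graph along a chain
lemma reach_of_chain {G : SimpleGraph V} {S : Set V} :
    ∀ (l : List V), l.Chain' G.Adj → (∀ v ∈ l, v ∈ S) → ∀ x y, l.head? = some x →
      l.getLast? = some y → ∀ (hx : x ∈ S) (hy : y ∈ S),
      (G.induce S).Reachable ⟨x, hx⟩ ⟨y, hy⟩ := by
  intro l
  induction l with
  | nil => simp
  | cons u r ih =>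
    intro hch hmem x y hx hy hxS hyS
    have hux : u = x := by simpa using hx
    subst hux
    match r with
    | [] =>
      have : u = y := by simpa using hy
      subst this; exact SimpleGraph.Reachable.refl _
    | w :: r' =>
      have hwS : w ∈ S := hmem w (by simp)
      have h1 : (G.induce S).Adj ⟨u, hxS⟩ ⟨w, hwS⟩ := by
        simp [SimpleGraph.comap_adj]
        exact (List.isChain_cons_cons.1 hch).1
      exact (h1.reachable).trans
        (ih (List.isChain_cons_cons.1 hch).2 (fun v hv => hmem v (List.mem_cons_of_mem _ hv))
          w y rfl (by simpa [List.getLast?] using hy) hwS hyS)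

lemma reach_head_mem {G : SimpleGraph V} {S : Set V} {l : List V}
    (hch : l.Chain' G.Adj) (hmem : ∀ v ∈ l, v ∈ S) {x w : V}
    (hx : l.head? = some x) (hw : w ∈ l) (hxS : x ∈ S) (hwS : w ∈ S) :
    (G.induce S).Reachable ⟨x, hxS⟩ ⟨w, hwS⟩ := by
  obtain ⟨m₁, m₂, rfl⟩ := List.append_of_mem hw
  have hpre : (m₁ ++ [w]) <+: (m₁ ++ w :: m₂) := ⟨m₂, by simp⟩
  refine reach_of_chain (m₁ ++ [w]) (hch.prefix hpre)
    (fun v hv => hmem v (hpre.subset hv)) x w ?_ List.getLast?_concat hxS hwS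
  rcases m₁ with _ | ⟨u, m₁'⟩
  · simpa using hx
  · simpa using hx

lemma reach_mem_last {G : SimpleGraph V} {S : Set V} {l : List V}
    (hch : l.Chain' G.Adj) (hmem : ∀ v ∈ l, v ∈ S) {w y : V}
    (hy : l.getLast? = some y) (hw : w ∈ l) (hwS : w ∈ S) (hyS : y ∈ S) :
    (G.induce S).Reachable ⟨w, hwS⟩ ⟨y, hyS⟩ := by
  obtain ⟨m₁, m₂, rfl⟩ := List.append_of_mem hw
  have hsuf : (w :: m₂) <:+ (m₁ ++ w :: m₂) := ⟨m₁, rfl⟩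
  refine reach_of_chain (w :: m₂) (hch.suffix hsuf)
    (fun v hv => hmem v (hsuf.subset hv)) w y rfl ?_ hwS hyS
  rw [List.getLast?_append] at hy
  rcases h : (w :: m₂).getLast? with _ | z
  · simp at h
  · rw [h] at hy; simpa using hy

lemma nodup_path_facts {x y : V} {s : List V} (h : (x :: s ++ [y]).Nodup) :
    x ∉ s ∧ x ≠ y ∧ y ∉ s ∧ s.Nodup := by
  simp [List.nodup_cons, List.nodup_append] at h
  tauto

lemma chain'_adj_reverse {G : SimpleGraph V} {l : List V} (h : l.Chain' G.Adj) :
    l.reverse.Chain' G.Adj := by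
  show l.reverse.IsChain G.Adj
  rw [List.isChain_reverse]
  exact (show l.IsChain G.Adj from h).imp fun _ _ h => h.symm

/-- Removing the first endpoint `x` of the cycle keeps it connected. -/
lemma conn_remove_x {G : SimpleGraph V} {x y : V} {s t : List V} {S : Set V}
    (hS : ∀ w, w ∈ S ↔ (w = x ∨ w = y ∨ w ∈ s ∨ w ∈ t))
    (ch1 : (x :: s ++ [y]).Chain' G.Adj) (ch2 : (x :: t ++ [y]).Chain' G.Adj)
    (nd1 : (x :: s ++ [y]).Nodup) (nd2 : (x :: t ++ [y]).Nodup) :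
    (G.induce (S \ {x})).Connected := by
  obtain ⟨hxs, hxy, hys, -⟩ := nodup_path_facts nd1
  obtain ⟨hxt, -, hyt, -⟩ := nodup_path_facts nd2
  have hyS : y ∈ S \ {x} := ⟨(hS y).2 (Or.inr (Or.inl rfl)), Ne.symm hxy⟩
  have mem1 : ∀ w ∈ s ++ [y], w ∈ S \ {x} := by
    intro w hw
    rcases List.mem_append.1 hw with hw | hw
    · exact ⟨(hS w).2 (Or.inr (Or.inr (Or.inl hw))), fun h => hxs (h ▸ hw)⟩
    · simp only [List.mem_singleton] at hw; exact hw ▸ hyS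
  have mem2 : ∀ w ∈ t ++ [y], w ∈ S \ {x} := by
    intro w hw
    rcases List.mem_append.1 hw with hw | hw
    · exact ⟨(hS w).2 (Or.inr (Or.inr (Or.inr hw))), fun h => hxt (h ▸ hw)⟩
    · simp only [List.mem_singleton] at hw; exact hw ▸ hyS
  have ch1' : (s ++ [y]).Chain' G.Adj := ch1.suffix ⟨[x], rfl⟩
  have ch2' : (t ++ [y]).Chain' G.Adj := ch2.suffix ⟨[x], rfl⟩
  have key : ∀ z : ↥(S \ {x}), (G.induce (S \ {x})).Reachable z ⟨y, hyS⟩ := by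
    rintro ⟨z, hz⟩
    have hz' := hz
    obtain ⟨hzS, hzx⟩ := hz'
    rcases (hS z).1 hzS with rfl | rfl | h | h
    · exact absurd rfl hzx
    · exact SimpleGraph.Reachable.refl _
    · exact reach_mem_last ch1' mem1 List.getLast?_concat
        (List.mem_append.2 (Or.inl h)) hz hyS
    · exact reach_mem_last ch2' mem2 List.getLast?_concat
        (List.mem_append.2 (Or.inl h)) hz hyS
  rw [SimpleGraph.connected_iff]
  exact ⟨fun u w => (key u).trans (key w).symm, ⟨⟨y, hyS⟩⟩⟩

/-- Removing an interior vertex `v ∈ s` of the cycle keeps it connected. -/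
lemma conn_remove_mid {G : SimpleGraph V} {x y v : V} {s t : List V} {S : Set V}
    (hS : ∀ w, w ∈ S ↔ (w = x ∨ w = y ∨ w ∈ s ∨ w ∈ t))
    (ch1 : (x :: s ++ [y]).Chain' G.Adj) (ch2 : (x :: t ++ [y]).Chain' G.Adj)
    (nd1 : (x :: s ++ [y]).Nodup) (nd2 : (x :: t ++ [y]).Nodup)
    (disj : ∀ w ∈ s, w ∉ t) (hv : v ∈ s) :
    (G.induce (S \ {v})).Connected := by
  obtain ⟨hxs, hxy, hys, hsnd⟩ := nodup_path_facts nd1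
  obtain ⟨hxt, -, hyt, -⟩ := nodup_path_facts nd2
  have hvx : v ≠ x := fun h => hxs (h ▸ hv)
  have hvy : v ≠ y := fun h => hys (h ▸ hv)
  have hvt : v ∉ t := disj v hv
  have hxS : x ∈ S \ {v} := ⟨(hS x).2 (Or.inl rfl), Ne.symm hvx⟩
  have hyS : y ∈ S \ {v} := ⟨(hS y).2 (Or.inr (Or.inl rfl)), Ne.symm hvy⟩
  obtain ⟨s₁, s₂, rfl⟩ := List.append_of_mem hv
  have hvs₁ : v ∉ s₁ := by
    intro h
    exact (List.nodup_append.1 hsnd).2.2 v h v List.mem_cons_self rfl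
  have hvs₂ : v ∉ s₂ := by
    have := (List.nodup_append.1 hsnd).2.1
    exact (List.nodup_cons.1 this).1
  -- the three sublists, avoiding v
  have mem1 : ∀ w ∈ x :: s₁, w ∈ S \ {v} := by
    intro w hw
    rcases List.mem_cons.1 hw with rfl | hw
    · exact hxS
    · exact ⟨(hS w).2 (Or.inr (Or.inr (Or.inl (by simp [hw])))),
        fun h => hvs₁ (h ▸ hw)⟩
  have mem2 : ∀ w ∈ s₂ ++ [y], w ∈ S \ {v} := by
    intro w hw
    rcases List.mem_append.1 hw with hw | hw
    · exact ⟨(hS w).2 (Or.inr (Or.inr (Or.inl (by simp [hw])))),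
        fun h => hvs₂ (h ▸ hw)⟩
    · simp only [List.mem_singleton] at hw; exact hw ▸ hyS
  have mem3 : ∀ w ∈ x :: t ++ [y], w ∈ S \ {v} := by
    intro w hw
    rcases List.mem_cons.1 hw with rfl | hw
    · exact hxS
    rcases List.mem_append.1 hw with hw | hw
    · exact ⟨(hS w).2 (Or.inr (Or.inr (Or.inr hw))), fun h => hvt (h ▸ hw)⟩
    · simp only [List.mem_singleton] at hw; exact hw ▸ hyS
  have ch1a : (x :: s₁).Chain' G.Adj := by
    refine ch1.prefix ⟨v :: s₂ ++ [y], by simp⟩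
  have ch1b : (s₂ ++ [y]).Chain' G.Adj := by
    refine ch1.suffix ⟨x :: s₁ ++ [v], by simp⟩
  have hxyR : (G.induce (S \ {v})).Reachable ⟨x, hxS⟩ ⟨y, hyS⟩ :=
    reach_head_mem ch2 mem3 rfl (by simp) hxS hyS
  have key : ∀ z : ↥(S \ {v}), (G.induce (S \ {v})).Reachable z ⟨x, hxS⟩ := by
    rintro ⟨z, hz⟩
    have hz' := hz
    obtain ⟨hzS, hzv⟩ := hz'
    rcases (hS z).1 hzS with rfl | rfl | h | h
    · exact SimpleGraph.Reachable.refl _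
    · exact hxyR.symm
    · rcases List.mem_append.1 h with h | h
      · exact (reach_head_mem ch1a mem1 rfl (List.mem_cons_of_mem _ h) hxS hz).symm
      · rcases List.mem_cons.1 h with rfl | h
        · exact absurd rfl hzv
        · exact (reach_mem_last ch1b mem2 List.getLast?_concat
            (List.mem_append.2 (Or.inl h)) hz hyS).trans hxyR.symm
    · exact (reach_head_mem ch2 mem3 rfl (by simp [h]) hxS hz).symm
  rw [SimpleGraph.connected_iff]
  exact ⟨fun u w => (key u).trans (key w).symm, ⟨⟨x, hxS⟩⟩⟩

lemma conn_whole {G : SimpleGraph V} {x y : V} {s t : List V} {S : Set V}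
    (hS : ∀ w, w ∈ S ↔ (w = x ∨ w = y ∨ w ∈ s ∨ w ∈ t))
    (ch1 : (x :: s ++ [y]).Chain' G.Adj) (ch2 : (x :: t ++ [y]).Chain' G.Adj) :
    (G.induce S).Connected := by
  have hxS : x ∈ S := (hS x).2 (Or.inl rfl)
  have mem1 : ∀ w ∈ x :: s ++ [y], w ∈ S := by
    intro w hw
    rcases List.mem_cons.1 hw with rfl | hw
    · exact hxS
    rcases List.mem_append.1 hw with hw | hw
    · exact (hS w).2 (Or.inr (Or.inr (Or.inl hw)))
    · simp only [List.mem_singleton] at hw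
      exact (hS w).2 (Or.inr (Or.inl hw))
  have mem2 : ∀ w ∈ x :: t ++ [y], w ∈ S := by
    intro w hw
    rcases List.mem_cons.1 hw with rfl | hw
    · exact hxS
    rcases List.mem_append.1 hw with hw | hw
    · exact (hS w).2 (Or.inr (Or.inr (Or.inr hw)))
    · simp only [List.mem_singleton] at hw
      exact (hS w).2 (Or.inr (Or.inl hw))
  have key : ∀ z : ↥S, (G.induce S).Reachable z ⟨x, hxS⟩ := by
    rintro ⟨z, hz⟩
    rcases (hS z).1 hz with rfl | rfl | h | h
    · exact SimpleGraph.Reachable.refl _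
    · exact (reach_head_mem ch1 mem1 rfl (by simp) hxS hz).symm
    · exact (reach_head_mem ch1 mem1 rfl (by simp [h]) hxS hz).symm
    · exact (reach_head_mem ch2 mem2 rfl (by simp [h]) hxS hz).symm
  rw [SimpleGraph.connected_iff]
  exact ⟨fun u w => (key u).trans (key w).symm, ⟨⟨x, hxS⟩⟩⟩

lemma cycle_biconnected {G : SimpleGraph V} {x y : V} {s t : List V} {S : Set V}
    (hS : ∀ w, w ∈ S ↔ (w = x ∨ w = y ∨ w ∈ s ∨ w ∈ t))
    (ch1 : (x :: s ++ [y]).Chain' G.Adj) (ch2 : (x :: t ++ [y]).Chain' G.Adj)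
    (nd1 : (x :: s ++ [y]).Nodup) (nd2 : (x :: t ++ [y]).Nodup)
    (disj : ∀ w ∈ s, w ∉ t) :
    IsBiconnected G S := by
  refine ⟨conn_whole hS ch1 ch2, fun v hv => ?_⟩
  have hS' : ∀ w, w ∈ S ↔ (w = y ∨ w = x ∨ w ∈ s.reverse ∨ w ∈ t.reverse) := by
    intro w; rw [hS]; simp only [List.mem_reverse]; tauto
  have ch1r : (y :: s.reverse ++ [x]).Chain' G.Adj := by
    have := chain'_adj_reverse ch1; simpa using this
  have ch2r : (y :: t.reverse ++ [x]).Chain' G.Adj := by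
    have := chain'_adj_reverse ch2; simpa using this
  have nd1r : (y :: s.reverse ++ [x]).Nodup := by
    rw [← List.nodup_reverse] at nd1; simpa using nd1
  have nd2r : (y :: t.reverse ++ [x]).Nodup := by
    rw [← List.nodup_reverse] at nd2; simpa using nd2
  rcases (hS v).1 hv with rfl | rfl | h | h
  · exact conn_remove_x hS ch1 ch2 nd1 nd2
  · exact conn_remove_x hS' ch1r ch2r nd1r nd2r
  · exact conn_remove_mid hS ch1 ch2 nd1 nd2 disj h
  · have hS'' : ∀ w, w ∈ S ↔ (w = x ∨ w = y ∨ w ∈ t ∨ w ∈ s) := by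
      intro w; rw [hS]; tauto
    exact conn_remove_mid hS'' ch2 ch1 nd2 nd1 (fun w hw hw2 => disj w hw2 hw) h

lemma exists_maximal_biconnected [Fintype V] {G : SimpleGraph V} {S : Set V}
    (h : IsBiconnected G S) : ∃ T, S ⊆ T ∧ IsBiconnected G T ∧
      ∀ S', T ⊆ S' → IsBiconnected G S' → T = S' := by
  have hfin : {T : Set V | S ⊆ T ∧ IsBiconnected G T}.Finite := Set.toFinite _
  obtain ⟨T, hT, hmax⟩ := Set.Finite.exists_maximal hfin ⟨S, subset_rfl, h⟩
  exact ⟨T, hT.1, hT.2, fun S' hsub hS' => le_antisymm hsub (hmax ⟨hT.1.trans hsub, hS'⟩ hsub)⟩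

lemma shortcut_edge [Fintype V] {E : V → V → Prop}
    (hacy : ∀ v, ¬ Relation.TransGen E v v) (hbg : IsBlockGraph (skeleton E))
    {x y : V} {s t : List V}
    (ch1 : (x :: s ++ [y]).Chain' E) (ch2 : (x :: t ++ [y]).Chain' E)
    (nd1 : (x :: s ++ [y]).Nodup) (nd2 : (x :: t ++ [y]).Nodup)
    (disj : ∀ w ∈ s, w ∉ t) : E x y := by
  obtain ⟨-, hxy, -, -⟩ := nodup_path_facts nd1
  have gch1 := chain'_skeleton nd1 ch1
  have gch2 := chain'_skeleton nd2 ch2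
  set S : Set V := {w | w = x ∨ w = y ∨ w ∈ s ∨ w ∈ t} with hSdef
  have hS : ∀ w, w ∈ S ↔ (w = x ∨ w = y ∨ w ∈ s ∨ w ∈ t) := fun w => Iff.rfl
  obtain ⟨T, hsub, hTb, hTmax⟩ :=
    exists_maximal_biconnected (cycle_biconnected hS gch1 gch2 nd1 nd2 disj)
  have clique := hbg T hTb hTmax
  have adj : (skeleton E).Adj x y :=
    clique (hsub ((hS x).2 (Or.inl rfl))) (hsub ((hS y).2 (Or.inr (Or.inl rfl)))) hxy
  rcases adj.2 with h | h
  · exact h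
  · exfalso
    have htg : Relation.TransGen E x y :=
      chain'_transGen_head_last (x :: s ++ [y]) (by simp) ch1 x y rfl
        List.getLast?_concat
    exact hacy x (htg.tail h)

lemma mem_of_getLast?' {l : List V} {v : V} (h : l.getLast? = some v) : v ∈ l := by
  obtain ⟨h', rfl⟩ := List.mem_getLast?_eq_getLast h
  exact List.getLast_mem h'

lemma exists_first_mem {p : V → Prop} :
    ∀ (l : List V), (∃ y ∈ l, p y) →
      ∃ s₁ y s₂, l = s₁ ++ y :: s₂ ∧ p y ∧ ∀ w ∈ s₁, ¬ p w := by
  intro l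
  induction l with
  | nil => simp
  | cons u r ih =>
    intro hex
    by_cases hu : p u
    · exact ⟨[], u, r, rfl, hu, by simp⟩
    · obtain ⟨y, hy, hpy⟩ := hex
      rcases List.mem_cons.1 hy with rfl | hy
      · exact absurd hpy hu
      · obtain ⟨s₁, y', s₂, rfl, hp, hn⟩ := ih ⟨y, hy, hpy⟩
        refine ⟨u :: s₁, y', s₂, rfl, hp, ?_⟩
        intro w hw
        rcases List.mem_cons.1 hw with rfl | hw
        · exact hu
        · exact hn w hw

lemma exists_divergence {b : V} :
    ∀ (l l' : List V), l.head? = l'.head? → l ≠ l' →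
      l.Nodup → l'.Nodup → l.getLast? = some b → l'.getLast? = some b →
      ∃ pre x t t', l = pre ++ x :: t ∧ l' = pre ++ x :: t' ∧
        t ≠ [] ∧ t' ≠ [] ∧ t.head? ≠ t'.head? := by
  intro l
  induction l with
  | nil => intro l' _ _ _ _ h _; simp at h
  | cons u r ih =>
    intro l' hhd hne hnd hnd' hlast hlast'
    match l' with
    | [] => simp at hhd
    | u' :: r' =>
      have huu : u = u' := by simpa using hhd
      subst huu
      by_cases hr : r.head? = r'.head?
      · -- continue into the tails
        match r, r' with
        | [], [] => exact absurd rfl hne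
        | [], w' :: r'' => simp at hr
        | w :: r'', [] => simp at hr
        | w :: r'', w' :: r''' =>
          have hrne : (w :: r'') ≠ (w' :: r''') := fun h => hne (by rw [h])
          obtain ⟨pre, x, t, t', h1, h2, h3, h4, h5⟩ :=
            ih (w' :: r''') hr hrne (List.nodup_cons.1 hnd).2 (List.nodup_cons.1 hnd').2
              (by rw [← List.getLast?_cons_cons]; exact hlast)
              (by rw [← List.getLast?_cons_cons]; exact hlast')
          exact ⟨u :: pre, x, t, t', by rw [List.cons_append, ← h1],
            by rw [List.cons_append, ← h2], h3, h4, h5⟩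
      · -- divergence here
        refine ⟨[], u, r, r', rfl, rfl, ?_, ?_, hr⟩
        · rintro rfl
          have : u = b := by simpa using hlast
          subst this
          match r', hne with
          | [], hne => exact hne rfl
          | w' :: r'', _ =>
            have : u ∈ w' :: r'' := by
              apply mem_of_getLast?'
              rw [← List.getLast?_cons_cons]; exact hlast'
            exact (List.nodup_cons.1 hnd').1 this
        · rintro rfl
          have : u = b := by simpa using hlast'
          subst this
          match r, hne with
          | [], hne => exact hne rfl
          | w :: r'', _ =>
            have : u ∈ w :: r'' := by
              apply mem_of_getLast?'
              rw [← List.getLast?_cons_cons]; exact hlast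
            exact (List.nodup_cons.1 hnd).1 this

lemma shorten {E : V → V → Prop} {a b x y : V} {pre mid post : List V}
    (hd : IsDirSeq E a b (pre ++ (x :: mid) ++ y :: post)) (hE : E x y)
    (hmid : mid ≠ []) :
    ∃ l₂ : List V, IsDirSeq E a b l₂ ∧
      l₂.length < (pre ++ (x :: mid) ++ y :: post).length := by
  obtain ⟨hch, hhd, hlast⟩ := hd
  refine ⟨pre ++ [x] ++ y :: post, ⟨?_, ?_, ?_⟩, ?_⟩
  · rw [List.append_assoc] at hch ⊢
    simp only [List.Chain'] at hch ⊢
    rw [List.isChain_append] at hch ⊢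
    obtain ⟨h1, h2, h3⟩ := hch
    rw [List.isChain_append] at h2 ⊢
    obtain ⟨h4, h5, h6⟩ := h2
    refine ⟨h1, ⟨by simp, h5, ?_⟩, ?_⟩
    · intro x' hx' y' hy'
      simp only [List.getLast?_singleton, Option.mem_some_iff] at hx'
      simp only [List.head?_cons, Option.mem_some_iff] at hy'
      subst hx'; subst hy'; exact hE
    · intro x' hx' y' hy'
      refine h3 x' hx' y' ?_
      simp only [List.head?_append, List.head?_cons] at hy' ⊢
      simpa using hy'
  · rw [List.append_assoc] at hhd ⊢
    rw [List.head?_append] at hhd ⊢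
    simpa using hhd
  · rw [List.getLast?_append_cons] at hlast ⊢
    exact hlast
  · have : 1 ≤ mid.length := List.length_pos_iff.2 hmid
    simp only [List.length_append, List.length_cons, List.length_singleton,
      List.length_nil]
    omega

lemma getLast?_cons_ne_nil {u : V} {r : List V} (h : r ≠ []) :
    (u :: r).getLast? = r.getLast? := by
  match r, h with
  | w :: r', _ => exact List.getLast?_cons_cons

/-- In a ttt, if there is a directed path between two distinct nodes, there is a
unique shortest directed path between them. -/
theorem stmt8 {V : Type u} [Fintype V] (E : V → V → Prop)
    (httt : IsTTT E) (a b : V) (hab : a ≠ b)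
    (hex : ∃ l : List V, IsDirSeq E a b l) :
    ∃! l : List V, IsDirSeq E a b l ∧
      ∀ l' : List V, IsDirSeq E a b l' → l.length ≤ l'.length := by
  classical
  obtain ⟨hacy, -, hbg⟩ := httt
  obtain ⟨l₀, hl₀⟩ := hex
  have hn : ∃ n, ∃ l : List V, IsDirSeq E a b l ∧ l.length = n :=
    ⟨l₀.length, l₀, hl₀, rfl⟩
  obtain ⟨l, hl, hlen⟩ := Nat.find_spec hn
  have hmin : ∀ l' : List V, IsDirSeq E a b l' → l.length ≤ l'.length := by
    intro l' hl'
    rw [hlen]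
    exact Nat.find_min' hn ⟨l', hl', rfl⟩
  refine ⟨l, ⟨hl, hmin⟩, ?_⟩
  rintro l' ⟨hl', hmin'⟩
  by_contra hne
  have nd := chain'_nodup hacy hl.1
  have nd' := chain'_nodup hacy hl'.1
  have hhd : l'.head? = l.head? := by rw [hl.2.1, hl'.2.1]
  obtain ⟨pre, x, t, t', h1, h2, ht, ht', hdiv⟩ :=
    exists_divergence l' l hhd hne nd' nd hl'.2.2 hl.2.2
  have hlt : t.getLast? = some b := by
    have h := hl'.2.2
    rw [h1, List.getLast?_append_cons, getLast?_cons_ne_nil ht] at h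
    exact h
  have hlt' : t'.getLast? = some b := by
    have h := hl.2.2
    rw [h2, List.getLast?_append_cons, getLast?_cons_ne_nil ht'] at h
    exact h
  obtain ⟨s₁, y, s₂, rfl, hyt', hfirst⟩ :=
    exists_first_mem t ⟨b, mem_of_getLast?' hlt, mem_of_getLast?' hlt'⟩
  obtain ⟨s₁', s₂', rfl⟩ := List.append_of_mem hyt'
  have inf1 : (x :: s₁ ++ [y]) <:+: l' := ⟨pre, s₂, by rw [h1]; simp⟩
  have inf2 : (x :: s₁' ++ [y]) <:+: l := ⟨pre, s₂', by rw [h2]; simp⟩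
  have ch1 : (x :: s₁ ++ [y]).Chain' E := hl'.1.infix inf1
  have ch2 : (x :: s₁' ++ [y]).Chain' E := hl.1.infix inf2
  have nd1 : (x :: s₁ ++ [y]).Nodup := nd'.sublist inf1.sublist
  have nd2 : (x :: s₁' ++ [y]).Nodup := nd.sublist inf2.sublist
  have disj : ∀ w ∈ s₁, w ∉ s₁' := fun w hw hw' =>
    hfirst w hw (List.mem_append.2 (Or.inl hw'))
  have hExy : E x y := shortcut_edge hacy hbg ch1 ch2 nd1 nd2 disj
  by_cases hs₁ : s₁ = []
  · by_cases hs₁' : s₁' = []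
    · subst hs₁; subst hs₁'
      simp at hdiv
    · have heq : l = pre ++ (x :: s₁') ++ y :: s₂' := by rw [h2]; simp
      rw [heq] at hl
      obtain ⟨l₂, hl₂, hlt₂⟩ := shorten hl hExy hs₁'
      have := hmin l₂ hl₂
      rw [heq] at this
      omega
  · have heq : l' = pre ++ (x :: s₁) ++ y :: s₂ := by rw [h1]; simp
    rw [heq] at hl'
    obtain ⟨l₂, hl₂, hlt₂⟩ := shorten hl' hExy hs₁
    have := hmin' l₂ hl₂
    rw [heq] at this
    omega
end

section
/- In a tree of transitive tournaments with a unique source, along the unique shortest directed path with node sequence v1, v2, ..., vn (n ≥ 2), every node vr with 2 ≤ r ≤ n-1 is the source of the maximal transitive tournament containing the edge (vr, v_{r+1}). -/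
open scoped Classical

universe u

variable {V : Type u}

section Aux

lemma chain_step {E : V → V → Prop} {l : List V} (h : l.Chain' E) {i : ℕ}
    (hi : i + 1 < l.length) : E (l[i]'(Nat.lt_of_succ_lt hi)) (l[i+1]'hi) := by
  have := List.isChain_iff_getElem.mp h i (by omega)
  simpa using this

lemma chain_rtg {E : V → V → Prop} {l : List V} (h : l.Chain' E) (i : ℕ) :
    ∀ j (hij : i ≤ j) (hj : j < l.length),
      Relation.ReflTransGen E (l[i]'(by omega)) (l[j]'hj) := by
  intro j
  induction j with
  | zero =>
    intro hij hj
    have : i = 0 := by omega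
    subst this
    exact Relation.ReflTransGen.refl
  | succ k ih =>
    intro hij hj
    rcases Nat.lt_or_ge i (k+1) with hlt | hge
    · exact (ih (by omega) (by omega)).tail (chain_step h hj)
    · have : i = k + 1 := by omega
      subst this
      exact Relation.ReflTransGen.refl

lemma source_reach {E : V → V → Prop} [Fintype V]
    (hacyc : ∀ v, ¬ Relation.TransGen E v v)
    {u : V} (hu : ∀ y, (∀ w, ¬ E w y) → y = u) :
    ∀ v, Relation.ReflTransGen E u v := by
  haveI htrans : IsTrans V (Relation.TransGen E) := ⟨fun _ _ _ => Relation.TransGen.trans⟩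
  haveI hirr : IsIrrefl V (Relation.TransGen E) := ⟨hacyc⟩
  have hwf : WellFounded E :=
    Subrelation.wf (fun {x y} h => Relation.TransGen.single h)
      (Finite.wellFounded_of_trans_of_irrefl (Relation.TransGen E))
  intro v
  induction v using hwf.induction with
  | _ v ih =>
    by_cases hv : ∀ w, ¬ E w v
    · rw [hu v hv]
    · push_neg at hv
      obtain ⟨w, hw⟩ := hv
      exact (ih w hw).tail hw

lemma reach_induce {E : V → V → Prop} (hacyc : ∀ v, ¬ Relation.TransGen E v v)
    (T : Set V) {x : V} :
    ∀ {y : V}, Relation.ReflTransGen E x y →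
      (∀ z, Relation.ReflTransGen E x z → Relation.ReflTransGen E z y → z ∈ T) →
      ∃ (hx : x ∈ T) (hy : y ∈ T), ((skeleton E).induce T).Reachable ⟨x, hx⟩ ⟨y, hy⟩ := by
  intro y h
  induction h with
  | refl =>
    intro hT
    have hx : x ∈ T := hT x .refl .refl
    exact ⟨hx, hx, SimpleGraph.Reachable.refl _⟩
  | @tail b c hab hbc ih =>
    intro hT
    obtain ⟨hx, hb, hr⟩ := ih (fun z h1 h2 => hT z h1 (h2.tail hbc))
    have hc : c ∈ T := hT _ (hab.tail hbc) .refl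
    have hne : b ≠ c := by rintro rfl; exact hacyc _ (.single hbc)
    have hadj : ((skeleton E).induce T).Adj ⟨b, hb⟩ ⟨c, hc⟩ := ⟨hne, Or.inl hbc⟩
    exact ⟨hx, hc, hr.trans hadj.reachable⟩

lemma reach_chain_head (G : SimpleGraph V) (S : Set V) :
    ∀ (P : List V) (a : V), (a :: P).Chain' G.Adj → (∀ z ∈ a :: P, z ∈ S) →
      ∀ y, y ∈ a :: P → ∀ (ha : a ∈ S) (hyS : y ∈ S),
        (G.induce S).Reachable ⟨a, ha⟩ ⟨y, hyS⟩ := by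
  intro P
  induction P with
  | nil =>
    intro a _ _ y hy ha hyS
    have : y = a := by simpa using hy
    subst this
    exact SimpleGraph.Reachable.refl _
  | cons b P ih =>
    intro a hchain hS y hy ha hyS
    rcases List.mem_cons.mp hy with rfl | hy'
    · exact SimpleGraph.Reachable.refl _
    · have hadj : G.Adj a b := (List.isChain_cons_cons.mp hchain).1
      have hb : b ∈ S := hS b (by simp)
      have step : (G.induce S).Adj ⟨a, ha⟩ ⟨b, hb⟩ := hadj
      exact step.reachable.trans
        (ih b (List.isChain_cons_cons.mp hchain).2 (fun z hz => hS z (List.mem_cons_of_mem a hz))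
          y hy' hb hyS)

lemma reach_chain (G : SimpleGraph V) (S : Set V) {P : List V}
    (hc : P.Chain' G.Adj) (hS : ∀ z ∈ P, z ∈ S) {x y : V}
    (hx : x ∈ P) (hy : y ∈ P) (hxS : x ∈ S) (hyS : y ∈ S) :
    (G.induce S).Reachable ⟨x, hxS⟩ ⟨y, hyS⟩ := by
  cases P with
  | nil => cases hx
  | cons a P =>
    have ha : a ∈ S := hS a (by simp)
    exact (reach_chain_head G S P a hc hS x hx ha hxS).symm.trans
      (reach_chain_head G S P a hc hS y hy ha hyS)

lemma connected_hub (G : SimpleGraph V) (S : Set V) (h0 : V) (hh : h0 ∈ S)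
    (hall : ∀ x (hx : x ∈ S), (G.induce S).Reachable ⟨x, hx⟩ ⟨h0, hh⟩) :
    (G.induce S).Connected := by
  haveI : Nonempty S := ⟨⟨h0, hh⟩⟩
  exact ⟨fun x y => (hall x.1 x.2).trans (hall y.1 y.2).symm⟩

lemma exists_max_bicon [Fintype V] (G : SimpleGraph V) {D : Set V}
    (hD : IsBiconnected G D) :
    ∃ S, D ⊆ S ∧ IsBiconnected G S ∧ ∀ S', S ⊆ S' → IsBiconnected G S' → S = S' := by
  obtain ⟨S, hS, hmax⟩ := Set.Finite.exists_maximalFor id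
    {S : Set V | D ⊆ S ∧ IsBiconnected G S} (Set.toFinite _) ⟨D, subset_rfl, hD⟩
  exact ⟨S, hS.1, hS.2, fun S' hsub hS' => subset_antisymm hsub (hmax ⟨hS.1.trans hsub, hS'⟩ hsub)⟩

end Aux

/-- In a ttt with unique source, every interior node of a (unique) shortest
directed path is the source of the maximal tournament it shares with the next
node on the path. -/
theorem stmt9 {V : Type u} [Fintype V] (E : V → V → Prop)
    (httt : IsTTT E) (hsrc : ∃! u : V, ∀ w, ¬ E w u)
    (a b : V) (l : List V) (hl : IsDirSeq E a b l)
    (hmin : ∀ l' : List V, IsDirSeq E a b l' → l.length ≤ l'.length)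
    (hn : 2 ≤ l.length) :
    ∀ r, 1 ≤ r → ∀ hr2 : r + 1 < l.length,
      ∀ S : Set V, IsMaxClique (skeleton E) S →
        l[r]'(by omega) ∈ S → l[r + 1]'hr2 ∈ S →
        ∀ w ∈ S, ¬ E w (l[r]'(by omega)) := by
  obtain ⟨hacyc, hconn, hblock⟩ := httt
  obtain ⟨hchain, hhead, hlast⟩ := hl
  intro r hr1 hr2 S hS hrS hr1S w hwS hw
  obtain ⟨s, rfl⟩ : ∃ s, r = s + 1 := ⟨r - 1, by omega⟩
  have hs2 : s + 2 < l.length := by omega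
  set x1 := l[s]'(by omega) with hx1def
  set x2 := l[s+1]'(by omega) with hx2def
  set x3 := l[s+2]'hs2 with hx3def
  -- basic edges
  have hE12 : E x1 x2 := chain_step hchain (by omega)
  have hE23 : E x2 x3 := chain_step hchain (i := s + 1) (by omega)
  have hw2 : E w x2 := hw
  have hwne2 : w ≠ x2 := by
    rintro rfl; exact hacyc x2 (.single hw2)
  have hwne3 : w ≠ x3 := by
    rintro rfl; exact hacyc x2 ((Relation.TransGen.single hE23).tail hw2)
  have hw3 : E w x3 := by
    rcases (hS.1 hwS hr1S hwne3).2 with h | h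
    · exact h
    · exact absurd (((Relation.TransGen.single hE23).tail h).tail hw2) (hacyc x2)
  -- distinctness
  have hne12 : x1 ≠ x2 := by
    intro h
    have : Relation.TransGen E x1 x2 := .single hE12
    rw [h] at this
    exact hacyc x2 this
  have hne13 : x1 ≠ x3 := by
    intro h
    have : Relation.TransGen E x1 x3 := (Relation.TransGen.single hE12).tail hE23
    rw [h] at this
    exact hacyc x3 this
  have hne23 : x2 ≠ x3 := by
    intro h
    have : Relation.TransGen E x2 x3 := .single hE23
    rw [h] at this
    exact hacyc x3 this
  -- a shorter path would contradict minimality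
  have hshort : ¬ E x1 x3 := by
    intro hE13
    have hmin' := hmin (l.take (s+1) ++ l.drop (s+2)) ?_
    · rw [List.length_append, List.length_take, List.length_drop] at hmin'
      omega
    refine ⟨?_, ?_, ?_⟩
    · refine List.isChain_append.mpr ⟨hchain.take _, hchain.drop _, ?_⟩
      intro p hp q hq
      have hplast : (l.take (s+1)).getLast? = some x1 := by
        rw [List.getLast?_eq_getElem?]
        simp only [List.length_take]
        rw [List.getElem?_take]
        rw [show min (s+1) l.length = s + 1 by omega]
        simp only [Nat.add_sub_cancel, if_pos (Nat.lt_succ_self s)]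
        exact List.getElem?_eq_getElem (by omega)
      have hqhead : (l.drop (s+2)).head? = some x3 := by
        rw [List.head?_drop]
        exact List.getElem?_eq_getElem hs2
      rw [hplast] at hp
      rw [hqhead] at hq
      cases hp; cases hq
      exact hE13
    · rw [List.head?_append]
      have h1 : (l.take (s+1)).head? = some a := by
        rw [List.head?_eq_getElem?, List.getElem?_take, if_pos (by omega : 0 < s + 1)]
        rw [← List.head?_eq_getElem?]
        exact hhead
      rw [h1]; rfl
    · rw [List.getLast?_append]
      have h1 : (l.drop (s+2)).getLast? = some b := by
        rw [List.getLast?_eq_getElem?, List.length_drop, List.getElem?_drop]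
        rw [show s + 2 + (l.length - (s+2) - 1) = l.length - 1 by omega]
        rw [← List.getLast?_eq_getElem?]
        exact hlast
      rw [h1]; rfl
  -- the source u reaches everything
  obtain ⟨u, hu, huniq⟩ := hsrc
  have hreach : ∀ v, Relation.ReflTransGen E u v :=
    source_reach hacyc (fun y hy => huniq y hy)
  by_cases hwx1 : w = x1
  · subst hwx1; exact hshort hw3
  -- build a skeleton path from x1 to w avoiding x2, x3
  set T : Set V := {z | z ≠ x2 ∧ z ≠ x3} with hTdef
  have hT1 : ∀ z, Relation.ReflTransGen E u z → Relation.ReflTransGen E z x1 → z ∈ T := by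
    intro z _ hz
    show z ≠ x2 ∧ z ≠ x3
    constructor
    · rintro rfl
      exact hacyc x2 (Relation.TransGen.tail' hz hE12)
    · rintro rfl
      exact hacyc x3 (Relation.TransGen.tail' (hz.tail hE12) hE23)
  have hT2 : ∀ z, Relation.ReflTransGen E u z → Relation.ReflTransGen E z w → z ∈ T := by
    intro z _ hz
    show z ≠ x2 ∧ z ≠ x3
    constructor
    · rintro rfl
      exact hacyc x2 (Relation.TransGen.tail' hz hw2)
    · rintro rfl
      exact hacyc x3 (Relation.TransGen.tail' hz hw3)
  obtain ⟨hu1, hx1T, hrA⟩ := reach_induce hacyc T (hreach x1) hT1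
  obtain ⟨_, hwT, hrB⟩ := reach_induce hacyc T (hreach w) hT2
  have hrx1w : ((skeleton E).induce T).Reachable ⟨x1, hx1T⟩ ⟨w, hwT⟩ := hrA.symm.trans hrB
  obtain ⟨p0⟩ := hrx1w
  set p := p0.bypass with hpdef
  set P : List V := p.support.map Subtype.val with hPdef
  have hPc : P.Chain' (skeleton E).Adj := by
    rw [hPdef]; show List.IsChain _ _; rw [List.isChain_map]
    exact p.isChain_adj_support
  have hPn : P.Nodup :=
    ((SimpleGraph.Walk.bypass_isPath p0).support_nodup).map Subtype.val_injective
  have hPh : P.head? = some x1 := by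
    rw [hPdef, List.head?_map, p.support_eq_cons]
    rfl
  have hPl : P.getLast? = some w := by
    rw [hPdef, List.getLast?_map,
      List.getLast?_eq_getLast p.support_ne_nil, p.getLast_support]
    rfl
  have hPT : ∀ z ∈ P, z ≠ x2 ∧ z ≠ x3 := by
    intro z hz
    rw [hPdef] at hz
    obtain ⟨⟨z', hz'⟩, _, rfl⟩ := List.mem_map.mp hz
    exact hz'
  have hx1P : x1 ∈ P := List.mem_of_mem_head? (by rw [hPh]; rfl)
  have hwP : w ∈ P := List.mem_of_mem_getLast? (by rw [hPl]; rfl)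
  -- the biconnected set D
  set D : Set V := {z | z ∈ P ∨ z = x2 ∨ z = x3} with hDdef
  have hx2D : x2 ∈ D := Or.inr (Or.inl rfl)
  have hx3D : x3 ∈ D := Or.inr (Or.inr rfl)
  have hPD : ∀ z ∈ P, z ∈ D := fun z hz => Or.inl hz
  have a12 : (skeleton E).Adj x1 x2 := ⟨hne12, Or.inl hE12⟩
  have a23 : (skeleton E).Adj x2 x3 := ⟨hne23, Or.inl hE23⟩
  have aw2 : (skeleton E).Adj w x2 := ⟨hwne2, Or.inl hw2⟩
  have aw3 : (skeleton E).Adj w x3 := ⟨hwne3, Or.inl hw3⟩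
  have hbicon : IsBiconnected (skeleton E) D := by
    constructor
    · refine connected_hub _ D x2 hx2D ?_
      intro y hyD
      have hy' : y ∈ P ∨ y = x2 ∨ y = x3 := hyD
      rcases hy' with hyP | rfl | rfl
      · refine (reach_chain _ D hPc hPD hyP hx1P hyD (hPD _ hx1P)).trans ?_
        exact (show ((skeleton E).induce D).Adj ⟨x1, hPD _ hx1P⟩ ⟨x2, hx2D⟩ from a12).reachable
      · exact SimpleGraph.Reachable.refl _
      · exact (show ((skeleton E).induce D).Adj ⟨x3, hyD⟩ ⟨x2, hx2D⟩ from a23.symm).reachable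
    · intro x hxD
      by_cases hxx2 : x = x2
      · subst hxx2
        have hwD' : w ∈ D \ {x2} :=
          ⟨hPD _ hwP, fun h => (hPT w hwP).1 (Set.mem_singleton_iff.mp h)⟩
        refine connected_hub _ (D \ {x2}) w hwD' ?_
        intro y hyD
        have hy' : y ∈ P ∨ y = x2 ∨ y = x3 := hyD.1
        have hyne : y ≠ x2 := fun h => hyD.2 (Set.mem_singleton_iff.mpr h)
        rcases hy' with hyP | rfl | rfl
        · refine reach_chain _ (D \ {x2}) hPc ?_ hyP hwP hyD hwD'
          intro z hz
          exact ⟨hPD _ hz, fun h => (hPT z hz).1 (Set.mem_singleton_iff.mp h)⟩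
        · exact absurd rfl hyne
        · exact (show ((skeleton E).induce (D \ {x2})).Adj ⟨x3, hyD⟩ ⟨w, hwD'⟩ from
            aw3.symm).reachable
      · have hx2D' : x2 ∈ D \ {x} :=
          ⟨hx2D, fun h => hxx2 (Set.mem_singleton_iff.mp h).symm⟩
        refine connected_hub _ (D \ {x}) x2 hx2D' ?_
        intro y hyD
        have hy' : y ∈ P ∨ y = x2 ∨ y = x3 := hyD.1
        have hyx : y ≠ x := fun h => hyD.2 (Set.mem_singleton_iff.mpr h)
        rcases hy' with hyP | rfl | rfl
        · by_cases hxP : x ∈ P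
          · obtain ⟨P₁, P₂, hPeq⟩ := List.append_of_mem hxP
            have hPn' := hPn
            rw [hPeq] at hPn'
            have hnd := List.nodup_append'.mp hPn'
            have hxP₁ : x ∉ P₁ := fun h => hnd.2.2 h (by simp)
            have hxP₂ : x ∉ P₂ := (List.nodup_cons.mp hnd.2.1).1
            have hcs := List.isChain_append.mp (hPeq ▸ hPc)
            rcases List.mem_append.mp (show y ∈ P₁ ++ x :: P₂ from hPeq ▸ hyP) with hyP₁ | hyP₂
            · -- y in first part, go to x1 then x2
              have hP₁ne : P₁ ≠ [] := fun h => by simp [h] at hyP₁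
              obtain ⟨c, P₁', rfl⟩ : ∃ c P₁', P₁ = c :: P₁' := by
                cases P₁ with
                | nil => exact absurd rfl hP₁ne
                | cons c P₁' => exact ⟨c, P₁', rfl⟩
              have hceq : c = x1 := by
                have hPh' := hPh
                rw [hPeq] at hPh'
                simpa using hPh'
              have hx1P₁ : x1 ∈ c :: P₁' := by
                rw [← hceq]; exact List.mem_cons_self
              have hsub : ∀ z ∈ c :: P₁', z ∈ D \ {x} := by
                intro z hz
                refine ⟨hPD z (by rw [hPeq]; exact List.mem_append_left _ hz), ?_⟩
                intro h
                exact hxP₁ ((Set.mem_singleton_iff.mp h) ▸ hz)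
              refine (reach_chain _ (D \ {x}) hcs.1 hsub hyP₁ hx1P₁ hyD (hsub _ hx1P₁)).trans ?_
              exact (show ((skeleton E).induce (D \ {x})).Adj ⟨x1, hsub _ hx1P₁⟩ ⟨x2, hx2D'⟩
                from a12).reachable
            · rcases List.mem_cons.mp hyP₂ with rfl | hyP₂'
              · exact absurd rfl hyx
              · -- y in second part, go to w then x2
                obtain ⟨c, P₂', rfl⟩ : ∃ c P₂', P₂ = c :: P₂' := by
                  cases P₂ with
                  | nil => simp at hyP₂'
                  | cons c P₂' => exact ⟨c, P₂', rfl⟩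
                have hwP₂ : w ∈ c :: P₂' := by
                  have hPl' := hPl
                  rw [hPeq, List.getLast?_append, List.getLast?_cons_cons,
                    List.getLast?_eq_getLast (l := c :: P₂') (by simp)] at hPl'
                  have := Option.some.inj hPl'
                  exact this ▸ List.getLast_mem _
                have hsub : ∀ z ∈ c :: P₂', z ∈ D \ {x} := by
                  intro z hz
                  refine ⟨hPD z (by
                    rw [hPeq]; exact List.mem_append_right _ (List.mem_cons_of_mem _ hz)), ?_⟩
                  intro h
                  exact hxP₂ ((Set.mem_singleton_iff.mp h) ▸ hz)
                have hcP₂ : (c :: P₂').Chain' (skeleton E).Adj := hcs.2.1.tail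
                refine (reach_chain _ (D \ {x}) hcP₂ hsub hyP₂' hwP₂ hyD (hsub _ hwP₂)).trans ?_
                exact (show ((skeleton E).induce (D \ {x})).Adj ⟨w, hsub _ hwP₂⟩ ⟨x2, hx2D'⟩
                  from aw2).reachable
          · -- x not in P : whole P available
            have hsub : ∀ z ∈ P, z ∈ D \ {x} := by
              intro z hz
              exact ⟨hPD z hz, fun h => hxP ((Set.mem_singleton_iff.mp h) ▸ hz)⟩
            refine (reach_chain _ (D \ {x}) hPc hsub hyP hx1P hyD (hsub _ hx1P)).trans ?_
            exact (show ((skeleton E).induce (D \ {x})).Adj ⟨x1, hsub _ hx1P⟩ ⟨x2, hx2D'⟩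
              from a12).reachable
        · exact SimpleGraph.Reachable.refl _
        · exact (show ((skeleton E).induce (D \ {x})).Adj ⟨x3, hyD⟩ ⟨x2, hx2D'⟩
            from a23.symm).reachable
  -- extend to a maximal biconnected set, which is a clique
  obtain ⟨S₀, hDS₀, hS₀, hS₀max⟩ := exists_max_bicon (skeleton E) hbicon
  have hclique := hblock S₀ hS₀ hS₀max
  have hadj13 : (skeleton E).Adj x1 x3 :=
    hclique (hDS₀ (hPD _ hx1P)) (hDS₀ hx3D) hne13
  rcases hadj13.2 with h | h
  · exact hshort h
  · exact hacyc x1 (((Relation.TransGen.single hE12).tail hE23).tail h)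
end

section
/- Let T be a tree of transitive tournaments with unique source carrying a recursive max-linear model with unit-Fréchet margins, and let v be a node with at least one parent, all parents of v lying in the tournament τ with node set V_τ. Then b_{vv} = 1 + ∑_{u ∈ pa(v)} ∑_{p ∈ π(u,v)} (-1)^{|p|} c_p, where the inner sum is over all directed paths p from u to v (necessarily inside τ), |p| is the number of edges of p, and c_p the product of edge weights of p. In particular, b_{vv} depends only on the edge weights within τ. -/
open scoped Classical

universe u

variable {V : Type u}

namespace TTTAux

variable {E : V → V → Prop}

lemma chain'_tg : ∀ (t : List V) (x y b : V), List.Chain' E (x :: y :: t) →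
    (y :: t).getLast? = some b → Relation.TransGen E x b := by
  intro t
  induction t with
  | nil =>
    intro x y b hc hb
    simp only [List.getLast?_singleton, Option.some.injEq] at hb
    subst hb
    exact Relation.TransGen.single (List.isChain_cons_cons.mp hc).1
  | cons z t ih =>
    intro x y b hc hb
    obtain ⟨hxy, hc'⟩ := List.isChain_cons_cons.mp hc
    rw [List.getLast?_cons_cons] at hb
    exact Relation.TransGen.head hxy (ih y z b hc' hb)

lemma dirseq_transGen {a b : V} {l : List V} (h : IsDirSeq E a b l) (hlen : 2 ≤ l.length) :
    Relation.TransGen E a b := by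
  obtain ⟨hc, hh, hl⟩ := h
  match l, hlen with
  | x :: y :: t, _ =>
    simp only [List.head?_cons, Option.some.injEq] at hh
    subst hh
    rw [List.getLast?_cons_cons] at hl
    exact chain'_tg t x y b hc hl

lemma dirseq_ne_nil {a b : V} {l : List V} (h : IsDirSeq E a b l) : l ≠ [] := by
  rintro rfl; simp [IsDirSeq] at h

lemma dirseq_head_mem {a b : V} {l : List V} (h : IsDirSeq E a b l) : a ∈ l := by
  obtain ⟨-, hh, -⟩ := h
  exact List.mem_of_mem_head? hh

lemma dirseq_last_mem {a b : V} {l : List V} (h : IsDirSeq E a b l) : b ∈ l := by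
  obtain ⟨-, -, hl⟩ := h
  exact List.mem_of_mem_getLast? hl

lemma dirseq_single {a b : V} {l : List V} (h : IsDirSeq E a b l) (hlen : l.length < 2) :
    a = b ∧ l = [a] := by
  obtain ⟨hc, hh, hl⟩ := h
  match l, hlen with
  | [x], _ =>
    simp only [List.head?_cons, Option.some.injEq] at hh
    simp only [List.getLast?_singleton, Option.some.injEq] at hl
    subst hh; subst hl; exact ⟨rfl, rfl⟩
  | [], _ => simp at hh

lemma dirseq_nodup (hdag : ∀ x, ¬ Relation.TransGen E x x) :
    ∀ (l : List V) (a b : V), IsDirSeq E a b l → l.Nodup := by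
  intro l
  induction l with
  | nil => intro a b _; simp
  | cons x t ih =>
    intro a b h
    obtain ⟨hc, hh, hl⟩ := h
    simp only [List.head?_cons, Option.some.injEq] at hh
    subst hh
    rw [List.nodup_cons]
    constructor
    · intro hxt
      obtain ⟨t1, t2, rfl⟩ := List.append_of_mem hxt
      have hpre : (x :: (t1 ++ [x])).Chain' E := by
        apply hc.prefix
        refine ⟨t2, by simp⟩
      have : Relation.TransGen E x x := by
        refine dirseq_transGen (E := E) (l := x :: (t1 ++ [x])) ⟨hpre, rfl, ?_⟩ (by simp)
        rw [show x :: (t1 ++ [x]) = (x :: t1) ++ [x] by simp, List.getLast?_concat]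
      exact hdag x this
    · cases t with
      | nil => simp
      | cons y t' =>
        refine ih y b ⟨hc.tail, rfl, ?_⟩
        rwa [List.getLast?_cons_cons] at hl

lemma dirseq_concat {a x b : V} {l : List V} (h : IsDirSeq E a x l) (he : E x b) :
    IsDirSeq E a b (l ++ [b]) := by
  obtain ⟨hc, hh, hl⟩ := h
  refine ⟨?_, ?_, List.getLast?_concat⟩
  · rw [List.Chain', List.isChain_append]
    refine ⟨hc, List.isChain_singleton _, ?_⟩
    intro p hp q hq
    rw [hl, Option.mem_def, Option.some.injEq] at hp
    rw [List.head?_cons, Option.mem_def, Option.some.injEq] at hq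
    subst hp; subst hq; exact he
  · rcases l with _ | ⟨z, t⟩
    · simp at hh
    · simpa using hh

lemma dirseq_edge {a b : V} (he : E a b) : IsDirSeq E a b [a, b] :=
  ⟨List.isChain_pair.mpr he, rfl, rfl⟩

lemma transGen_dirseq {a b : V} (h : Relation.TransGen E a b) :
    ∃ l, IsDirSeq E a b l ∧ 2 ≤ l.length := by
  induction h with
  | single he => exact ⟨_, dirseq_edge he, by simp⟩
  | tail _ he ih =>
    obtain ⟨l, hl, hlen⟩ := ih
    refine ⟨l ++ [_], dirseq_concat hl he, by simp; omega⟩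

lemma dirseq_length_two {a b : V} {l : List V} (h : IsDirSeq E a b l) (hl : l.length = 2) :
    l = [a, b] := by
  obtain ⟨hc, hh, hll⟩ := h
  match l, hl with
  | [x, y], _ =>
    simp only [List.head?_cons, Option.some.injEq] at hh
    have : y = b := by simpa [List.getLast?] using hll
    rw [hh, this]

/-- suffix of a dirseq starting at a member -/
lemma dirseq_suffix {a b x : V} {l1 l2 : List V} (h : IsDirSeq E a b (l1 ++ x :: l2)) :
    IsDirSeq E x b (x :: l2) := by
  obtain ⟨hc, hh, hl⟩ := h
  refine ⟨(List.isChain_append.mp hc).2.1, rfl, ?_⟩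
  obtain ⟨c, hc2⟩ := Option.isSome_iff_exists.mp
    (List.getLast?_isSome.mpr (by simp : (x :: l2) ≠ []))
  rw [List.getLast?_append, hc2] at hl
  simp only [Option.or] at hl
  rw [hc2]; exact hl

/-- prefix of a dirseq up to a member -/
lemma dirseq_prefix {a b x : V} {l1 l2 : List V} (h : IsDirSeq E a b (l1 ++ x :: l2))
    (hne : l1 ≠ []) : IsDirSeq E a x (l1 ++ [x]) := by
  obtain ⟨hc, hh, hl⟩ := h
  refine ⟨hc.prefix ⟨l2, by simp⟩, ?_, List.getLast?_concat⟩
  rcases l1 with _ | ⟨z, t⟩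
  · exact absurd rfl hne
  · simpa using hh

lemma dirseq_head_eq {a a' b : V} {l : List V} (h : IsDirSeq E a b l) (h' : IsDirSeq E a' b l) :
    a = a' := by
  obtain ⟨-, hh, -⟩ := h; obtain ⟨-, hh', -⟩ := h'
  rw [hh] at hh'; exact Option.some.inj hh'

end TTTAux
namespace TTTAux

variable {E : V → V → Prop}

/-- penultimate element -/
def pen (l : List V) : Option V := l.dropLast.getLast?

lemma pen_eq (q : List V) (g b : V) : pen (q ++ [g, b]) = some g := by
  unfold pen
  rw [show q ++ [g, b] = (q ++ [g]) ++ [b] by simp, List.dropLast_concat,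
    List.getLast?_concat]

lemma pen_decomp {a b : V} {l : List V} (h : IsDirSeq E a b l) (hlen : 2 ≤ l.length) :
    ∃ q g, l = q ++ [g, b] ∧ pen l = some g ∧ E g b ∧
      (q = [] → g = a) ∧ (q ≠ [] → q.head? = some a) := by
  obtain ⟨hc, hh, hl⟩ := h
  have hne : l ≠ [] := by rintro rfl; simp at hh
  have hdec1 : l.dropLast ++ [l.getLast hne] = l := List.dropLast_append_getLast hne
  have hb : l.getLast hne = b := by
    rw [List.getLast?_eq_getLast hne] at hl; exact Option.some.inj hl
  have hne2 : l.dropLast ≠ [] := by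
    intro h0
    rw [h0] at hdec1
    rw [← hdec1] at hlen
    simp at hlen
  have hdec2 : l.dropLast.dropLast ++ [l.dropLast.getLast hne2] = l.dropLast :=
    List.dropLast_append_getLast hne2
  refine ⟨l.dropLast.dropLast, l.dropLast.getLast hne2, ?_, ?_, ?_, ?_, ?_⟩
  · conv_rhs => rw [show l.dropLast.dropLast ++ [l.dropLast.getLast hne2, b] =
      (l.dropLast.dropLast ++ [l.dropLast.getLast hne2]) ++ [b] by simp, hdec2, ← hb, hdec1]
  · unfold pen; rw [List.getLast?_eq_getLast hne2]
  · -- E g b from chain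
    have hch : l.Chain' E := hc
    rw [← hdec1, ← hdec2] at hch
    have h3 := (List.isChain_append.mp hch).2.2
    have h4 := h3 (l.dropLast.getLast hne2)
      (by rw [Option.mem_def, List.getLast?_concat]) (l.getLast hne) (by simp)
    rwa [hb] at h4
  · intro h0
    rw [← hdec1, ← hdec2, h0] at hh
    simpa using hh
  · intro h0
    rw [← hdec1, ← hdec2] at hh
    rcases hq : l.dropLast.dropLast with _ | ⟨z, t⟩
    · exact absurd hq h0
    · rw [hq] at hh
      simpa using hh

lemma pen_concat (q : List V) (b : V) (h : q ≠ []) : pen (q ++ [b]) = q.getLast? := by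
  unfold pen; rw [List.dropLast_concat]

/-- pen of a long-enough suffix agrees -/
lemma pen_append {l1 l2 : List V} (hlen : 2 ≤ l2.length) : pen (l1 ++ l2) = pen l2 := by
  unfold pen
  have hne : l2.dropLast ≠ [] := by
    intro h0
    have := congrArg List.length h0
    rw [List.length_dropLast] at this
    simp at this; omega
  rw [List.dropLast_append_of_ne_nil (by intro h0; rw [h0] at hlen; simp at hlen)]
  obtain ⟨c, hc2⟩ := Option.isSome_iff_exists.mp (List.getLast?_isSome.mpr hne)
  rw [List.getLast?_append, hc2]
  simp only [Option.or]

lemma prodAlong_cons_cons (cE : V → V → ℝ) (a b : V) (r : List V) :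
    prodAlong cE (a :: b :: r) = cE a b * prodAlong cE (b :: r) := rfl

lemma prodAlong_pos {cE : V → V → ℝ} (hc : ∀ i j, E i j → 0 < cE i j) :
    ∀ (l : List V), l.Chain' E → 0 < prodAlong cE l
  | [], _ => by simp [prodAlong]
  | [_], _ => by simp [prodAlong]
  | a :: b :: r, h => by
    rw [prodAlong_cons_cons]
    have hab : E a b := (List.isChain_cons_cons.mp h).1
    exact mul_pos (hc a b hab) (prodAlong_pos hc (b :: r) (List.isChain_cons_cons.mp h).2)

lemma prodAlong_concat (cE : V → V → ℝ) (g b : V) :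
    ∀ (q : List V), prodAlong cE (q ++ [g, b]) = prodAlong cE (q ++ [g]) * cE g b := by
  intro q
  induction q with
  | nil => simp [prodAlong]
  | cons a q ih =>
    cases q with
    | nil => simp [prodAlong]
    | cons c q' =>
      have l1 : (a :: c :: q') ++ [g, b] = a :: ((c :: q') ++ [g, b]) := rfl
      have l2 : (a :: c :: q') ++ [g] = a :: ((c :: q') ++ [g]) := rfl
      rw [l1, l2]
      have h1 : ((c :: q') ++ [g, b]) = c :: (q' ++ [g, b]) := rfl
      have h2 : ((c :: q') ++ [g]) = c :: (q' ++ [g]) := rfl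
      rw [h1, h2, prodAlong_cons_cons, prodAlong_cons_cons, ← h1, ← h2, ih]
      ring

/-- skeleton adjacency from an edge -/
lemma adj_of_edge (hdag : ∀ x, ¬ Relation.TransGen E x x) {a b : V} (h : E a b) :
    (skeleton E).Adj a b := by
  refine (⟨?_, Or.inl h⟩ : a ≠ b ∧ (E a b ∨ E b a))
  rintro rfl
  exact hdag a (Relation.TransGen.single h)

lemma edge_ne (hdag : ∀ x, ¬ Relation.TransGen E x x) {a b : V} (h : E a b) : a ≠ b := by
  rintro rfl; exact hdag a (Relation.TransGen.single h)

lemma tg_ne (hdag : ∀ x, ¬ Relation.TransGen E x x) {a b : V}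
    (h : Relation.TransGen E a b) : a ≠ b := by
  rintro rfl; exact hdag a h

lemma edge_of_adj_tg (hdag : ∀ x, ¬ Relation.TransGen E x x) {a b : V}
    (hadj : (skeleton E).Adj a b) (h : Relation.TransGen E a b) : E a b := by
  rcases (hadj : a ≠ b ∧ (E a b ∨ E b a)).2 with h1 | h1
  · exact h1
  · exact absurd (h.trans (Relation.TransGen.single h1)) (hdag a)

lemma chain_skeleton (hdag : ∀ x, ¬ Relation.TransGen E x x) {l : List V}
    (h : l.Chain' E) : l.Chain' (skeleton E).Adj :=
  List.IsChain.imp (fun _ _ he => adj_of_edge hdag he) h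

end TTTAux
namespace TTTAux

variable {E : V → V → Prop}

lemma induced_connected_of_chain (G : SimpleGraph V) (l : List V) (hne : l ≠ [])
    (hch : l.Chain' G.Adj) : (G.induce {x | x ∈ l}).Connected := by
  have hhead : l.head hne ∈ l := List.head_mem hne
  have key : ∀ (n : ℕ) (hn : n < l.length),
      (G.induce {x | x ∈ l}).Reachable ⟨l.head hne, hhead⟩
        ⟨l.get ⟨n, hn⟩, by exact List.get_mem _ _⟩ := by
    intro n
    induction n with
    | zero =>
      intro hn
      have h0 : l.get ⟨0, hn⟩ = l.head hne := by
        rcases l with _ | ⟨x, t⟩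
        · exact absurd rfl hne
        · rfl
      have he : (⟨l.get ⟨0, hn⟩, by exact List.get_mem _ _⟩ : {x // x ∈ {x | x ∈ l}}) =
          ⟨l.head hne, hhead⟩ := Subtype.ext h0
      rw [he]
    | succ n ih =>
      intro hn
      have hn' : n < l.length := by omega
      have hadj : G.Adj (l.get ⟨n, hn'⟩) (l.get ⟨n + 1, hn⟩) :=
        List.isChain_iff_getElem.mp hch n (by omega)
      have hadj' : (G.induce {x | x ∈ l}).Adj ⟨l.get ⟨n, hn'⟩, by exact List.get_mem _ _⟩
          ⟨l.get ⟨n + 1, hn⟩, by exact List.get_mem _ _⟩ := hadj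
      exact (ih hn').trans hadj'.reachable
  rw [SimpleGraph.connected_iff]
  refine ⟨?_, ⟨⟨l.head hne, hhead⟩⟩⟩
  rintro ⟨x, hx⟩ ⟨y, hy⟩
  obtain ⟨nx, hgx⟩ := List.mem_iff_get.mp hx
  obtain ⟨ny, hgy⟩ := List.mem_iff_get.mp hy
  have r1 := key nx.1 nx.2
  have r2 := key ny.1 ny.2
  have e1 : (⟨l.get ⟨nx.1, nx.2⟩, by exact List.get_mem _ _⟩ : {x // x ∈ {x | x ∈ l}}) =
      ⟨x, hx⟩ := by apply Subtype.ext; simpa using hgx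
  have e2 : (⟨l.get ⟨ny.1, ny.2⟩, by exact List.get_mem _ _⟩ : {x // x ∈ {x | x ∈ l}}) =
      ⟨y, hy⟩ := by apply Subtype.ext; simpa using hgy
  rw [e1] at r1; rw [e2] at r2
  exact r1.symm.trans r2

end TTTAux
namespace TTTAux

variable {E : V → V → Prop}

lemma rotate_chain (G : SimpleGraph V) {c₁ c₂ : List V} {w : V}
    (hch : List.Chain' G.Adj (c₁ ++ w :: c₂))
    (hwrap : ∀ x ∈ (c₁ ++ w :: c₂).getLast?, ∀ y ∈ (c₁ ++ w :: c₂).head?, G.Adj x y) :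
    List.Chain' G.Adj (c₂ ++ c₁) := by
  rcases eq_or_ne c₁ [] with rfl | h1
  · simp only [List.append_nil]
    exact (show List.Chain' G.Adj (w :: c₂) by simpa using hch).tail
  rcases eq_or_ne c₂ [] with rfl | h2
  · simpa [List.Chain'] using hch.prefix ⟨[w], by simp⟩
  rw [List.Chain', List.isChain_append]
  refine ⟨((List.isChain_append.mp hch).2.1).tail, (List.isChain_append.mp hch).1, ?_⟩
  intro x hx y hy
  apply hwrap
  · obtain ⟨xc, hxc⟩ := Option.isSome_iff_exists.mp (List.getLast?_isSome.mpr h2)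
    rw [hxc] at hx
    have hgl : (c₁ ++ w :: c₂).getLast? = some xc := by
      rw [List.getLast?_append]
      have h5 : (w :: c₂).getLast? = some xc := by
        rcases c₂ with _ | ⟨z, t⟩
        · exact absurd rfl h2
        · rw [List.getLast?_cons_cons]; exact hxc
      rw [h5]; simp [Option.or]
    rw [hgl]; exact hx
  · rcases c₁ with _ | ⟨z, t⟩
    · exact absurd rfl h1
    · simpa using hy

lemma cycle_biconnected (G : SimpleGraph V) {c : List V} (h3 : 3 ≤ c.length)
    (hnd : c.Nodup) (hch : List.Chain' G.Adj c)
    (hwrap : ∀ x ∈ c.getLast?, ∀ y ∈ c.head?, G.Adj x y) :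
    IsBiconnected G {x | x ∈ c} := by
  have hne : c ≠ [] := by rintro rfl; simp at h3
  constructor
  · exact induced_connected_of_chain G c hne hch
  · intro w hw
    obtain ⟨c₁, c₂, rfl⟩ := List.append_of_mem hw
    have hnd' := hnd
    rw [List.nodup_append'] at hnd'
    have hw1 : w ∉ c₁ := fun hmem => hnd'.2.2 hmem List.mem_cons_self
    have hw2 : w ∉ c₂ := (List.nodup_cons.mp hnd'.2.1).1
    have hset : {x | x ∈ c₁ ++ w :: c₂} \ {w} = {x | x ∈ c₂ ++ c₁} := by
      ext x
      simp only [Set.mem_diff, Set.mem_setOf_eq, Set.mem_singleton_iff, List.mem_append,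
        List.mem_cons]
      constructor
      · rintro ⟨h4 | (h4 | h4), h5⟩
        · exact Or.inr h4
        · exact absurd h4 h5
        · exact Or.inl h4
      · rintro (h4 | h4)
        · exact ⟨Or.inr (Or.inr h4), fun he => hw2 (he ▸ h4)⟩
        · exact ⟨Or.inl h4, fun he => hw1 (he ▸ h4)⟩
    rw [hset]
    have hdne : c₂ ++ c₁ ≠ [] := by
      intro h0
      rw [List.append_eq_nil_iff] at h0
      have := congrArg List.length (h0.2)
      have h6 := congrArg List.length (h0.1)
      simp only [List.length_append, List.length_cons] at h3 ⊢
      rw [h0.1, h0.2] at h3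
      simp at h3
    exact induced_connected_of_chain G _ hdne (rotate_chain G hch hwrap)

lemma clique_of_cycle [Fintype V] (G : SimpleGraph V) (hbg : IsBlockGraph G) {c : List V}
    (h3 : 3 ≤ c.length) (hnd : c.Nodup) (hch : List.Chain' G.Adj c)
    (hwrap : ∀ x ∈ c.getLast?, ∀ y ∈ c.head?, G.Adj x y) :
    ∀ x ∈ c, ∀ y ∈ c, x = y ∨ G.Adj x y := by
  have hbc : IsBiconnected G {x | x ∈ c} := cycle_biconnected G h3 hnd hch hwrap
  set S := {x : V | x ∈ c} with hS
  have hfin : ({T : Set V | S ⊆ T ∧ IsBiconnected G T}).Finite := Set.toFinite _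
  obtain ⟨T, ⟨hST, hbT⟩, hmax⟩ := Set.Finite.exists_maximalFor Set.ncard
    {T : Set V | S ⊆ T ∧ IsBiconnected G T} hfin ⟨S, subset_rfl, hbc⟩
  have hclique : G.IsClique T := by
    apply hbg T hbT
    intro T' hsub hb'
    have hle : T.ncard ≤ T'.ncard := Set.ncard_le_ncard hsub (Set.toFinite _)
    have := hmax ⟨hST.trans hsub, hb'⟩ hle
    exact Set.eq_of_subset_of_ncard_le hsub this (Set.toFinite _)
  intro x hx y hy
  rcases eq_or_ne x y with rfl | hxy
  · exact Or.inl rfl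
  · exact Or.inr (hclique (hST hx) (hST hy) hxy)

/-- all vertices of a directed path whose endpoints are skeleton-adjacent are
pairwise adjacent -/
lemma clique_of_dirseq [Fintype V] (hdag : ∀ x, ¬ Relation.TransGen E x x)
    (hbg : IsBlockGraph (skeleton E)) {a b : V} {l : List V} (h : IsDirSeq E a b l)
    (hab : (skeleton E).Adj b a) :
    ∀ x ∈ l, ∀ y ∈ l, x = y ∨ (skeleton E).Adj x y := by
  rcases lt_or_ge l.length 2 with hlen | hlen
  · obtain ⟨rfl, rfl⟩ := dirseq_single h hlen
    intro x hx y hy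
    simp only [List.mem_singleton] at hx hy
    subst hx; subst hy; exact Or.inl rfl
  rcases eq_or_lt_of_le hlen with hlen2 | hlen3
  · have : l = [a, b] := dirseq_length_two h hlen2.symm
    subst this
    intro x hx y hy
    simp only [List.mem_cons, List.mem_singleton, List.not_mem_nil, or_false] at hx hy
    rcases hx with rfl | rfl <;> rcases hy with rfl | rfl
    · exact Or.inl rfl
    · exact Or.inr hab.symm
    · exact Or.inr hab
    · exact Or.inl rfl
  · apply clique_of_cycle (skeleton E) hbg (by omega) (dirseq_nodup hdag l a b h)
      (chain_skeleton hdag h.1)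
    intro x hx y hy
    rw [h.2.2] at hx; rw [h.2.1] at hy
    simp only [Option.mem_def, Option.some.injEq] at hx hy
    subst hx; subst hy; exact hab

end TTTAux
namespace TTTAux

variable {E : V → V → Prop}

lemma pen_some_len {l : List V} {g : V} (h : pen l = some g) : 2 ≤ l.length := by
  unfold pen at h
  have h1 : l.dropLast ≠ [] := by
    intro h0; rw [h0] at h; simp at h
  have h2 := List.length_pos_iff.mpr h1
  rw [List.length_dropLast] at h2
  omega

lemma dirseq_pen_decomp {a b g : V} {l : List V} (h : IsDirSeq E a b l)
    (hp : pen l = some g) :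
    ∃ q, l = q ++ [g, b] ∧ E g b ∧ (q = [] → g = a) ∧ (q ≠ [] → q.head? = some a) := by
  obtain ⟨q, g', hdec, hpen, he, hq1, hq2⟩ := pen_decomp h (pen_some_len hp)
  rw [hp] at hpen
  obtain rfl : g = g' := Option.some.inj hpen
  exact ⟨q, hdec, he, hq1, hq2⟩

lemma dirseq_splice {i x w : V} {l₁ l₂ l'' : List V}
    (h : IsDirSeq E i w (l₁ ++ x :: l₂)) (h'' : IsDirSeq E x w l'') (hne : l₁ ≠ []) :
    IsDirSeq E i w (l₁ ++ l'') := by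
  obtain ⟨hc, hh, hl⟩ := h
  obtain ⟨hc'', hh'', hl''⟩ := h''
  have hne'' : l'' ≠ [] := by rintro rfl; simp at hh''
  refine ⟨?_, ?_, ?_⟩
  · rw [List.Chain', List.isChain_append]
    refine ⟨hc.prefix ⟨x :: l₂, rfl⟩, hc'', ?_⟩
    intro p hp q hq
    have hlink := (List.isChain_append.mp hc).2.2 p hp x (by simp)
    rw [hh''] at hq
    simp only [Option.mem_def, Option.some.injEq] at hq
    subst hq
    exact hlink
  · rcases l₁ with _ | ⟨z, t⟩
    · exact absurd rfl hne
    · simpa using hh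
  · obtain ⟨c, hc2⟩ := Option.isSome_iff_exists.mp (List.getLast?_isSome.mpr hne'')
    rw [List.getLast?_append, hc2]
    simp only [Option.or]
    rw [hc2] at hl''
    exact hl''

lemma maingu [Fintype V] (hdag : ∀ x, ¬ Relation.TransGen E x x)
    (hbg : IsBlockGraph (skeleton E)) :
    ∀ (n : ℕ) (i w g u : V) (l m : List V),
      IsDirSeq E i w l → (∀ l', IsDirSeq E i w l' → l.length ≤ l'.length) →
      IsDirSeq E i w m → l.length + m.length ≤ n →
      pen l = some g → pen m = some u → g ≠ u → E g u := by
  intro n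
  induction n with
  | zero =>
    intro i w g u l m hl hmin hm hn hpl hpm hgu
    have := pen_some_len hpl
    omega
  | succ n ih =>
    intro i w g u l m hl hmin hm hn hpl hpm hgu
    have hlen_l := pen_some_len hpl
    have hlen_m := pen_some_len hpm
    have htg : Relation.TransGen E i w := dirseq_transGen hl hlen_l
    have hiw : i ≠ w := tg_ne hdag htg
    by_cases hcom : ∃ x, x ∈ l ∧ x ∈ m ∧ x ≠ i ∧ x ≠ w
    · -- Case B: common internal vertex, recurse
      obtain ⟨x, hxl, hxm, hxi, hxw⟩ := hcom
      obtain ⟨l₁, l₂, hldec⟩ := List.append_of_mem hxl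
      obtain ⟨m₁, m₂, hmdec⟩ := List.append_of_mem hxm
      subst hldec; subst hmdec
      have hl₁ : l₁ ≠ [] := by
        rintro rfl
        exact hxi (by simpa using hl.2.1)
      have hm₁ : m₁ ≠ [] := by
        rintro rfl
        exact hxi (by simpa using hm.2.1)
      have hl₂ : l₂ ≠ [] := by
        rintro rfl
        apply hxw
        have h9 := hl.2.2
        rw [show l₁ ++ x :: [] = l₁ ++ [x] by simp, List.getLast?_concat] at h9
        exact Option.some.inj h9
      have hm₂ : m₂ ≠ [] := by
        rintro rfl
        apply hxw
        have h9 := hm.2.2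
        rw [show m₁ ++ x :: [] = m₁ ++ [x] by simp, List.getLast?_concat] at h9
        exact Option.some.inj h9
      have hsl : IsDirSeq E x w (x :: l₂) := dirseq_suffix hl
      have hsm : IsDirSeq E x w (x :: m₂) := dirseq_suffix hm
      have hlen2 : 2 ≤ (x :: l₂).length := by
        simp only [List.length_cons]
        have := List.length_pos_iff.mpr hl₂
        omega
      have hlen2m : 2 ≤ (x :: m₂).length := by
        simp only [List.length_cons]
        have := List.length_pos_iff.mpr hm₂
        omega
      have hpl' : pen (x :: l₂) = some g := by
        rw [← pen_append (l1 := l₁) hlen2]; exact hpl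
      have hpm' : pen (x :: m₂) = some u := by
        rw [← pen_append (l1 := m₁) hlen2m]; exact hpm
      have hmin' : ∀ l', IsDirSeq E x w l' → (x :: l₂).length ≤ l'.length := by
        intro l' hl'
        have := hmin (l₁ ++ l') (dirseq_splice hl hl' hl₁)
        simp only [List.length_append, List.length_cons] at this ⊢
        omega
      apply ih x w g u (x :: l₂) (x :: m₂) hsl hmin' hsm ?_ hpl' hpm' hgu
      have e1 := List.length_pos_iff.mpr hl₁
      have e2 := List.length_pos_iff.mpr hm₁
      simp only [List.length_append, List.length_cons] at hn ⊢
      omega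
    · -- Case A: internally disjoint
      push_neg at hcom
      obtain ⟨ql, hldec, hegw, hql1, hql2⟩ := dirseq_pen_decomp hl hpl
      obtain ⟨qm, hmdec, heuw, hqm1, hqm2⟩ := dirseq_pen_decomp hm hpm
      rcases eq_or_ne qm [] with rfl | hqm
      · -- m = [u, w] with u = i , forces l = [g, w] and g = i = u, contra
        have hui : u = i := hqm1 rfl
        exfalso
        have h2 : l.length ≤ 2 := hmin [i, w] (dirseq_edge (hui ▸ heuw))
        have h3 := congrArg List.length hldec
        simp only [List.length_append, List.length_cons, List.length_nil] at h3
        have h4 : ql = [] := List.eq_nil_of_length_eq_zero (by omega)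
        exact hgu ((hql1 h4).trans hui.symm)
      rcases eq_or_ne ql [] with rfl | hql
      · -- l = [g, w] with g = i; conclude E i u from the cycle on m
        have hgi : g = i := hql1 rfl
        have hlm : 3 ≤ m.length := by
          have h3 := congrArg List.length hmdec
          have h5 := List.length_pos_iff.mpr hqm
          simp only [List.length_append, List.length_cons, List.length_nil] at h3
          omega
        have hclq := clique_of_cycle (skeleton E) hbg hlm (dirseq_nodup hdag m i w hm)
          (chain_skeleton hdag hm.1) ?_
        · have him : i ∈ m := dirseq_head_mem hm
          have hum : u ∈ m := by rw [hmdec]; simp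
          rcases hclq i him u hum with heq | hadj
          · exact absurd (hgi.trans heq) hgu
          · -- TransGen i u from prefix of m
            have hpre : IsDirSeq E i u (qm ++ [u]) := by
              have : m = qm ++ u :: [w] := by simpa using hmdec
              exact dirseq_prefix (this ▸ hm) hqm
            have htgiu : Relation.TransGen E i u := by
              apply dirseq_transGen hpre
              have := List.length_pos_iff.mpr hqm
              simp only [List.length_append, List.length_cons, List.length_nil]
              omega
            rw [hgi]
            exact edge_of_adj_tg hdag hadj htgiu
        · -- wrap : Adj w i
          intro x hx y hy
          rw [hm.2.2] at hx
          rw [hm.2.1] at hy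
          simp only [Option.mem_def, Option.some.injEq] at hx hy
          subst hx; subst hy
          exact (adj_of_edge hdag (hgi ▸ hegw)).symm
      · -- both internal parts nonempty : contradiction via the big cycle
        exfalso
        obtain ⟨z, qm', rfl⟩ : ∃ z qm', qm = z :: qm' := by
          rcases qm with _ | ⟨z, qm'⟩
          · exact absurd rfl hqm
          · exact ⟨z, qm', rfl⟩
        obtain rfl : i = z := by
          have h9 := hqm2 (by simp)
          exact (Option.some.inj (by simpa using h9)).symm
        set t : List V := qm' ++ [u] with ht
        have htne : t ≠ [] := by simp [ht]
        have hmshape : m = i :: (t ++ [w]) := by rw [hmdec, ht]; simp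
        have hndm : m.Nodup := dirseq_nodup hdag m i w hm
        have hndl : l.Nodup := dirseq_nodup hdag l i w hl
        have ht_sub : t.Sublist m := by
          rw [hmshape]
          refine List.IsInfix.sublist ⟨[i], [w], by simp⟩
        have hndt : t.Nodup := List.Nodup.sublist ht_sub hndm
        have hch_t : t.Chain' E := by
          have h1 : m.Chain' E := hm.1
          rw [hmshape] at h1
          exact (h1.tail).prefix ⟨[w], rfl⟩
        have hch_trev : List.Chain' (skeleton E).Adj t.reverse := by
          rw [List.Chain', List.isChain_reverse]
          exact (chain_skeleton hdag hch_t).imp (fun a b h => h.symm)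
        have hlne : l ≠ [] := dirseq_ne_nil hl
        have htrevne : t.reverse ≠ [] := by simpa using htne
        -- head of t
        obtain ⟨y0, hy0⟩ := Option.isSome_iff_exists.mp
          (List.isSome_head?.mpr htne)
        have hiy0 : E i y0 := by
          have h1 : m.Chain' E := hm.1
          rw [hmshape] at h1
          have h2 := (List.isChain_cons.mp h1).1
          apply h2
          rcases t with _ | ⟨t0, ts⟩
          · exact absurd rfl htne
          · simpa using hy0
        -- the cycle
        have hchain_c : List.Chain' (skeleton E).Adj (l ++ t.reverse) := by
          rw [List.Chain', List.isChain_append]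
          refine ⟨chain_skeleton hdag hl.1, hch_trev, ?_⟩
          intro x hx y hy
          rw [hl.2.2] at hx
          rw [List.head?_reverse] at hy
          rw [ht, List.getLast?_concat] at hy
          simp only [Option.mem_def, Option.some.injEq] at hx hy
          subst hx; subst hy
          exact (adj_of_edge hdag heuw).symm
        have hdisj : l.Disjoint t.reverse := by
          intro x hxl hxt
          rw [List.mem_reverse] at hxt
          have hxm : x ∈ m := ht_sub.mem hxt
          have hxi : x ≠ i := by
            rintro rfl
            have h5 := hndm
            rw [hmshape, List.nodup_cons] at h5
            exact h5.1 (List.mem_append_left _ hxt)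
          have hxw : x ≠ w := by
            rintro rfl
            have h5 := hndm
            rw [hmshape, show i :: (t ++ [x]) = ([i] ++ t) ++ [x] by simp,
              List.nodup_append'] at h5
            exact h5.2.2 (List.mem_append_right _ hxt) (by simp)
          exact hxw (hcom x hxl hxm hxi)
        have hndc : (l ++ t.reverse).Nodup := by
          rw [List.nodup_append']
          exact ⟨hndl, List.nodup_reverse.mpr hndt, hdisj⟩
        have hlenc : 3 ≤ (l ++ t.reverse).length := by
          have := List.length_pos_iff.mpr htrevne
          simp only [List.length_append]
          omega
        have hclq := clique_of_cycle (skeleton E) hbg hlenc hndc hchain_c ?_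
        · have hiw' : i ∈ l ++ t.reverse := List.mem_append_left _ (dirseq_head_mem hl)
          have hww' : w ∈ l ++ t.reverse := List.mem_append_left _ (dirseq_last_mem hl)
          rcases hclq i hiw' w hww' with heq | hadj
          · exact hiw heq
          · have heiw : E i w := edge_of_adj_tg hdag hadj htg
            have h2 : l.length ≤ 2 := hmin [i, w] (dirseq_edge heiw)
            have h3 := congrArg List.length hldec
            have h5 := List.length_pos_iff.mpr hql
            simp only [List.length_append, List.length_cons, List.length_nil] at h3
            omega
        · -- wrap : Adj y0 i
          intro x hx y hy
          have hgl : (l ++ t.reverse).getLast? = some y0 := by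
            obtain ⟨c0, hc0⟩ := Option.isSome_iff_exists.mp
              (List.getLast?_isSome.mpr htrevne)
            rw [List.getLast?_append, hc0]
            simp only [Option.or]
            rw [List.getLast?_reverse] at hc0
            rw [hy0] at hc0
            rw [hc0]
          have hhd : (l ++ t.reverse).head? = some i := by
            rcases l with _ | ⟨z0, l0⟩
            · exact absurd rfl hlne
            · simpa using hl.2.1
          rw [hgl] at hx
          rw [hhd] at hy
          simp only [Option.mem_def, Option.some.injEq] at hx hy
          subst hx; subst hy
          exact (adj_of_edge hdag hiy0).symm

end TTTAux
namespace TTTAux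

variable {E : V → V → Prop}

lemma shortest_edge (hdag : ∀ x, ¬ Relation.TransGen E x x) {i w : V} {l : List V}
    (hl : IsDirSeq E i w l) (hmin : ∀ l', IsDirSeq E i w l' → l.length ≤ l'.length)
    (he : E i w) : l = [i, w] := by
  have h2 : l.length ≤ 2 := hmin [i, w] (dirseq_edge he)
  have h3 : 2 ≤ l.length := by
    by_contra h4
    push_neg at h4
    obtain ⟨heq, -⟩ := dirseq_single hl h4
    exact edge_ne hdag he heq
  exact dirseq_length_two hl (by omega)

lemma prodAlong_last {cE : V → V → ℝ} {lg : List V} {g : V}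
    (hlast : lg.getLast? = some g) (w : V) :
    prodAlong cE (lg ++ [w]) = prodAlong cE lg * cE g w := by
  have hne : lg ≠ [] := by rintro rfl; simp at hlast
  have hdec : lg.dropLast ++ [lg.getLast hne] = lg := List.dropLast_append_getLast hne
  have hg : lg.getLast hne = g := by
    rw [List.getLast?_eq_getLast hne] at hlast; exact Option.some.inj hlast
  conv_lhs => rw [← hdec, hg]
  conv_rhs => rw [← hdec, hg]
  rw [List.append_assoc]
  exact prodAlong_concat cE g w lg.dropLast

lemma crit_prefix (hdag : ∀ x, ¬ Relation.TransGen E x x) {cE : V → V → ℝ}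
    (hce : ∀ i j, E i j → 0 < cE i j) {i w g : V} {l lg q : List V}
    (hl : IsDirSeq E i w l)
    (hlcrit : ∀ l', IsDirSeq E i w l' → l' ≠ l → prodAlong cE l' < prodAlong cE l)
    (hlg : IsDirSeq E i g lg)
    (hlgcrit : ∀ l', IsDirSeq E i g l' → l' ≠ lg → prodAlong cE l' < prodAlong cE lg)
    (hdec : l = q ++ [g, w]) (hegw : E g w) (hq : q ≠ []) :
    q ++ [g] = lg ∧ prodAlong cE l = prodAlong cE lg * cE g w := by
  have hl' : IsDirSeq E i w (q ++ g :: [w]) := by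
    rw [show q ++ g :: [w] = q ++ [g, w] by simp, ← hdec]
    exact hl
  have hpre : IsDirSeq E i g (q ++ [g]) := dirseq_prefix hl' hq
  have hprod_l : prodAlong cE l = prodAlong cE (q ++ [g]) * cE g w := by
    rw [hdec]; exact prodAlong_concat cE g w q
  have heq : q ++ [g] = lg := by
    by_contra hne
    have h1 : prodAlong cE (q ++ [g]) < prodAlong cE lg := hlgcrit _ hpre hne
    have hcand : IsDirSeq E i w (lg ++ [w]) := dirseq_concat hlg hegw
    have hcne : lg ++ [w] ≠ l := by
      intro h0
      rw [hdec] at h0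
      have : lg = q ++ [g] := by
        have := congrArg List.dropLast h0
        rw [List.dropLast_concat, show q ++ [g, w] = (q ++ [g]) ++ [w] by simp,
          List.dropLast_concat] at this
        exact this
      exact hne this.symm
    have h2 : prodAlong cE (lg ++ [w]) < prodAlong cE l := hlcrit _ hcand hcne
    rw [prodAlong_last hlg.2.2 w, hprod_l] at h2
    have h3 : (0:ℝ) < cE g w := hce g w hegw
    nlinarith
  refine ⟨heq, ?_⟩
  rw [hprod_l, heq]

end TTTAux

open TTTAux

/-- In the max-linear model on a ttt with unique source and critical unique
shortest paths, for a node `v` with at least one parent,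
`b_vv = 1 + ∑_{u ∈ pa(v)} ∑_{p ∈ π(u,v)} (-1)^{|p|} c_p`. -/
theorem stmt14 {V : Type u} [Fintype V] (E : V → V → Prop)
    (httt : IsTTT E) (hsrc : ∃! u : V, ∀ w, ¬ E w u)
    (cE : V → V → ℝ) (cD : V → ℝ) (sp : V → V → ℝ)
    (hce : ∀ i j, E i j → 0 < cE i j ∧ cE i j < 1)
    (hcDpos : ∀ w, 0 < cD w)
    -- `sp i v` is the weight product of the unique shortest directed path from
    -- `i` to `v`, which is moreover the unique critical path:
    (hsp : ∀ i w, Relation.TransGen E i w → ∃ l : List V, IsDirSeq E i w l ∧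
      (∀ l', IsDirSeq E i w l' → l.length ≤ l'.length) ∧
      sp i w = prodAlong cE l ∧
      (∀ l', IsDirSeq E i w l' → l' ≠ l → prodAlong cE l' < prodAlong cE l))
    (hcD : ∀ w, cD w =
      1 - ∑ i : V, if Relation.TransGen E i w then cD i * sp i w else 0)
    (v : V) (hv : ∃ u, E u v)
    -- `P u` enumerates all directed paths (vertex sequences) from `u` to `v`:
    (P : V → Finset (List V)) (hP : ∀ u (l : List V), l ∈ P u ↔ IsDirSeq E u v l) :
    cD v = 1 + ∑ u : V, if E u v then
      ∑ l ∈ P u, (-1 : ℝ) ^ (l.length - 1) * prodAlong cE l else 0 := by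
  classical
  obtain ⟨hdag, -, hbg⟩ := httt
  have hce' : ∀ i j, E i j → 0 < cE i j := fun i j h => (hce i j h).1
  choose L hL1 hL2 hL3 hL4 using hsp
  have hlen : ∀ i w (h : Relation.TransGen E i w), 2 ≤ (L i w h).length := by
    intro i w h
    by_contra h4
    push_neg at h4
    exact tg_ne hdag h (dirseq_single (hL1 i w h) h4).1
  have hdecomp : ∀ (i w : V) (h : Relation.TransGen E i w), ∃ g q,
      L i w h = q ++ [g, w] ∧ E g w ∧ (q = [] → g = i) ∧ (q ≠ [] → q.head? = some i) := by
    intro i w h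
    obtain ⟨q, g, hd, hpen, he, h1, h2⟩ := pen_decomp (hL1 i w h) (hlen i w h)
    exact ⟨g, q, hd, he, h1, h2⟩
  choose gw qf hdec hE hq1 hq2 using hdecomp
  have hpen : ∀ i w (h : Relation.TransGen E i w), pen (L i w h) = some (gw i w h) := by
    intro i w h; rw [hdec i w h]; exact pen_eq _ _ _
  have hL_edge : ∀ i w (h : Relation.TransGen E i w), E i w → L i w h = [i, w] :=
    fun i w h he => shortest_edge hdag (hL1 i w h) (hL2 i w h) he
  have hsp_edge : ∀ i w (h : Relation.TransGen E i w), E i w → sp i w = cE i w := by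
    intro i w h he
    rw [hL3 i w h, hL_edge i w h he]
    simp [prodAlong]
  have htg_gw : ∀ i w (h : Relation.TransGen E i w), gw i w h ≠ i →
      Relation.TransGen E i (gw i w h) := by
    intro i w h hne
    have hq : qf i w h ≠ [] := fun h0 => hne (hq1 i w h h0)
    have hl' : IsDirSeq E i w (qf i w h ++ gw i w h :: [w]) := by
      rw [show qf i w h ++ gw i w h :: [w] = qf i w h ++ [gw i w h, w] by simp, ← hdec i w h]
      exact hL1 i w h
    have hpre := dirseq_prefix hl' hq
    apply dirseq_transGen hpre
    have := List.length_pos_iff.mpr hq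
    simp only [List.length_append, List.length_cons, List.length_nil]
    omega
  have hsp_fact : ∀ i w (h : Relation.TransGen E i w) (hne : gw i w h ≠ i),
      sp i w = sp i (gw i w h) * cE (gw i w h) w := by
    intro i w h hne
    have htg' := htg_gw i w h hne
    have hq : qf i w h ≠ [] := fun h0 => hne (hq1 i w h h0)
    obtain ⟨-, hprod⟩ := crit_prefix hdag hce' (hL1 i w h) (hL4 i w h)
      (hL1 i (gw i w h) htg') (hL4 i (gw i w h) htg') (hdec i w h) (hE i w h) hq
    rw [hL3 i w h, hL3 i (gw i w h) htg', hprod]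
  have hmaingu : ∀ i w (h : Relation.TransGen E i w) (m : List V) (z : V),
      IsDirSeq E i w m → pen m = some z → z ≠ gw i w h → E (gw i w h) z := by
    intro i w h m z hm hpm hne
    exact maingu hdag hbg ((L i w h).length + m.length) i w (gw i w h) z (L i w h) m
      (hL1 i w h) (hL2 i w h) hm le_rfl (hpen i w h) hpm (Ne.symm hne)
  have hPP : ∀ j u, E j v → E u v → Relation.TransGen E j u → E j u := by
    intro j u hjv huv htg'
    obtain ⟨m0, hm0, hlen0⟩ := transGen_dirseq htg'
    have hl0 : IsDirSeq E j v (m0 ++ [v]) := dirseq_concat hm0 huv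
    have hclq := clique_of_dirseq hdag hbg hl0 ((adj_of_edge hdag hjv).symm)
    rcases hclq j (List.mem_append_left _ (dirseq_head_mem hm0)) u
        (List.mem_append_left _ (dirseq_last_mem hm0)) with heq | hadj
    · exact absurd heq (tg_ne hdag htg')
    · exact edge_of_adj_tg hdag hadj htg'
  have adj_of_four : ∀ {a b c d : V}, E a b → E b c → E d c → E a d → b ≠ d → a ≠ c →
      (skeleton E).Adj a c := by
    intro a b c d hab hbc hdc had hbd hac
    have hclq := clique_of_cycle (skeleton E) hbg (c := [a, b, c, d]) (by simp)
      ?_ ?_ ?_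
    · rcases hclq a (by simp) c (by simp) with heq | hadj
      · exact absurd heq hac
      · exact hadj
    · have h1 : a ≠ b := edge_ne hdag hab
      have h2 : b ≠ c := edge_ne hdag hbc
      have h3 : d ≠ c := edge_ne hdag hdc
      have h4 : a ≠ d := edge_ne hdag had
      simp [h1, h2, h3.symm, h4, hbd, hac]
    · refine List.isChain_cons_cons.mpr ⟨adj_of_edge hdag hab, ?_⟩
      refine List.isChain_cons_cons.mpr ⟨adj_of_edge hdag hbc, ?_⟩
      refine List.isChain_cons_cons.mpr ⟨(adj_of_edge hdag hdc).symm, ?_⟩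
      exact List.isChain_singleton _
    · intro x hx y hy
      simp only [Option.mem_def, Option.some.injEq] at hx hy
      have hx' : x = d := by simpa using hx.symm
      have hy' : y = a := by simpa using hy.symm
      subst hx'; subst hy'
      exact (adj_of_edge hdag had).symm
  -- gateway of an external ancestor
  have hgv_ne : ∀ i (hi : Relation.TransGen E i v), ¬ E i v → gw i v hi ≠ i :=
    fun i hi hni heq => hni (heq ▸ hE i v hi)
  have hF2 : ∀ i u (hi : Relation.TransGen E i v), E u v →
      Relation.TransGen E i u → gw i v hi = u ∨ E (gw i v hi) u := by
    intro i u hi huv htgiu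
    obtain ⟨m0, hm0, hlen0⟩ := transGen_dirseq htgiu
    have hm : IsDirSeq E i v (m0 ++ [v]) := dirseq_concat hm0 huv
    have hpm : pen (m0 ++ [v]) = some u := by
      rw [pen_concat _ _ (dirseq_ne_nil hm0)]; exact hm0.2.2
    by_cases he : u = gw i v hi
    · exact Or.inl he.symm
    · exact Or.inr (hmaingu i v hi _ u hm hpm he)
  have hF3 : ∀ i u (hi : Relation.TransGen E i v), ¬ E i v → E u v →
      Relation.TransGen E i u → gw i v hi ≠ u →
      sp i u = sp i (gw i v hi) * cE (gw i v hi) u := by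
    intro i u hi hni huv htgiu hne
    have hEgu : E (gw i v hi) u := (hF2 i u hi huv htgiu).resolve_left hne
    have hgi : gw i v hi ≠ i := hgv_ne i hi hni
    by_cases hhg : gw i u htgiu = gw i v hi
    · have hne2 : gw i u htgiu ≠ i := by rw [hhg]; exact hgi
      have h9 := hsp_fact i u htgiu hne2
      rw [hhg] at h9; exact h9
    · exfalso
      have htgig : Relation.TransGen E i (gw i v hi) := htg_gw i v hi hgi
      have hmg : IsDirSeq E i u (L i (gw i v hi) htgig ++ [u]) :=
        dirseq_concat (hL1 i (gw i v hi) htgig) hEgu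
      have hpmg : pen (L i (gw i v hi) htgig ++ [u]) = some (gw i v hi) := by
        rw [pen_concat _ _ (dirseq_ne_nil (hL1 i (gw i v hi) htgig))]
        exact (hL1 i (gw i v hi) htgig).2.2
      have hEh2g : E (gw i u htgiu) (gw i v hi) :=
        hmaingu i u htgiu _ (gw i v hi) hmg hpmg (fun heq => hhg heq.symm)
      have hEh2u : E (gw i u htgiu) u := hE i u htgiu
      by_cases hh2i : gw i u htgiu = i
      · -- then E i u and E i (gw i v hi); 4-cycle forces E i v, contradiction
        apply hni
        have hEiu : E i u := by rw [hh2i] at hEh2u; exact hEh2u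
        have hEig : E i (gw i v hi) := by rw [hh2i] at hEh2g; exact hEh2g
        have hadj := adj_of_four hEiu huv (hE i v hi) hEig
          (fun h0 => hne (h0.symm)) (tg_ne hdag hi)
        exact edge_of_adj_tg hdag hadj hi
      · -- gw i u ≠ i : get E (gw i u) v, then maingu at v gives a 2-cycle
        have htgih2 : Relation.TransGen E i (gw i u htgiu) := htg_gw i u htgiu hh2i
        have htgh2v : Relation.TransGen E (gw i u htgiu) v :=
          Relation.TransGen.head hEh2u (Relation.TransGen.single huv)
        have hEh2v : E (gw i u htgiu) v := by
          have hadj := adj_of_four (a := gw i u htgiu) (b := u) (c := v)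
            (d := gw i v hi) hEh2u huv (hE i v hi) hEh2g
            (fun h0 => hne h0.symm) (tg_ne hdag htgh2v)
          exact edge_of_adj_tg hdag hadj htgh2v
        have hmh : IsDirSeq E i v (L i (gw i u htgiu) htgih2 ++ [v]) :=
          dirseq_concat (hL1 i (gw i u htgiu) htgih2) hEh2v
        have hpmh : pen (L i (gw i u htgiu) htgih2 ++ [v]) = some (gw i u htgiu) := by
          rw [pen_concat _ _ (dirseq_ne_nil (hL1 i (gw i u htgiu) htgih2))]
          exact (hL1 i (gw i u htgiu) htgih2).2.2
        have hEgh2 : E (gw i v hi) (gw i u htgiu) :=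
          hmaingu i v hi _ (gw i u htgiu) hmh hpmh hhg
        exact hdag (gw i v hi)
          ((Relation.TransGen.single hEgh2).trans (Relation.TransGen.single hEh2g))
    -- ======== the algebra ========
  set pF : Finset V := Finset.univ.filter (fun u => E u v) with hpF
  set ExtF : Finset V := Finset.univ.filter
    (fun i => Relation.TransGen E i v ∧ ¬ E i v) with hExtF
  have hmem_pF : ∀ u, u ∈ pF ↔ E u v := by intro u; rw [hpF]; simp
  have hmem_Ext : ∀ i, i ∈ ExtF ↔ (Relation.TransGen E i v ∧ ¬ E i v) := by
    intro i; rw [hExtF]; simp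
  set gv : V → V := fun i =>
    if h : Relation.TransGen E i v then gw i v h else i with hgvdef
  have hgv_spec : ∀ i (hi : Relation.TransGen E i v), gv i = gw i v hi := by
    intro i hi; rw [hgvdef]; simp only [dif_pos hi]
  set σf : V → ℝ := fun j => ∑ i ∈ ExtF, if gv i = j then cD i * sp i j else 0 with hσf
  set T : V → ℝ := fun u => cD u + σf u with hTdef
  set F : V → ℝ := fun u => ∑ l ∈ P u, (-1 : ℝ) ^ l.length * prodAlong cE l with hFdef
  have hsplit : ∀ w : V, (∀ i, Relation.TransGen E i w → Relation.TransGen E i v) →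
      ∑ i : V, (if Relation.TransGen E i w then cD i * sp i w else 0)
      = ∑ j ∈ pF, (if Relation.TransGen E j w then cD j * sp j w else 0)
      + ∑ i ∈ ExtF, (if Relation.TransGen E i w then cD i * sp i w else 0) := by
    intro w hW
    rw [hpF, hExtF, Finset.sum_filter, Finset.sum_filter, ← Finset.sum_add_distrib]
    apply Finset.sum_congr rfl
    intro i _
    by_cases h1 : Relation.TransGen E i w
    · have h2 := hW i h1
      by_cases h3 : E i v
      · simp [h1, h2, h3]
      · simp [h1, h2, h3]
    · simp [h1]
  have hmaps : ∀ i ∈ ExtF, gv i ∈ pF := by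
    intro i hi0
    obtain ⟨hi, hni⟩ := (hmem_Ext i).mp hi0
    rw [hmem_pF, hgv_spec i hi]
    exact hE i v hi
  -- R2
  have hR2 : cD v = 1 - ∑ j ∈ pF, cE j v * T j := by
    have h0 := hcD v
    rw [hsplit v (fun i h => h)] at h0
    have hA : ∑ j ∈ pF, (if Relation.TransGen E j v then cD j * sp j v else 0)
        = ∑ j ∈ pF, cD j * cE j v := by
      apply Finset.sum_congr rfl
      intro j hj
      have hjv : E j v := (hmem_pF j).mp hj
      have htg : Relation.TransGen E j v := Relation.TransGen.single hjv
      rw [if_pos htg, hsp_edge j v htg hjv]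
    have hB : ∑ i ∈ ExtF, (if Relation.TransGen E i v then cD i * sp i v else 0)
        = ∑ j ∈ pF, cE j v * σf j := by
      have h1 : ∀ i ∈ ExtF, (if Relation.TransGen E i v then cD i * sp i v else 0)
          = cD i * sp i (gv i) * cE (gv i) v := by
        intro i hi0
        obtain ⟨hi, hni⟩ := (hmem_Ext i).mp hi0
        rw [if_pos hi, hgv_spec i hi, hsp_fact i v hi (hgv_ne i hi hni)]
        ring
      rw [Finset.sum_congr rfl h1,
        ← Finset.sum_fiberwise_of_maps_to hmaps (fun i => cD i * sp i (gv i) * cE (gv i) v)]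
      apply Finset.sum_congr rfl
      intro j hj
      trans (∑ i ∈ Finset.filter (fun i => gv i = j) ExtF, cD i * sp i j) * cE j v
      · rw [Finset.sum_mul]
        apply Finset.sum_congr rfl
        intro i hi0
        have hgij : gv i = j := (Finset.mem_filter.mp hi0).2
        rw [hgij]
      · rw [Finset.sum_filter, mul_comm]
    rw [hA, hB, ← Finset.sum_add_distrib] at h0
    rw [h0]
    congr 1
    apply Finset.sum_congr rfl
    intro j _
    rw [hTdef]
    ring
    -- R1
  have hR1 : ∀ u, E u v →
      T u = 1 - ∑ j ∈ pF, (if E j u then cE j u * T j else 0) := by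
    intro u huv
    have h0 := hcD u
    rw [hsplit u (fun i h => h.trans (Relation.TransGen.single huv))] at h0
    have hA : ∑ j ∈ pF, (if Relation.TransGen E j u then cD j * sp j u else 0)
        = ∑ j ∈ pF, (if E j u then cD j * cE j u else 0) := by
      apply Finset.sum_congr rfl
      intro j hj
      have hjv : E j v := (hmem_pF j).mp hj
      by_cases h1 : E j u
      · rw [if_pos (Relation.TransGen.single h1), if_pos h1,
          hsp_edge j u (Relation.TransGen.single h1) h1]
      · rw [if_neg h1, if_neg (fun h2 => h1 (hPP j u hjv huv h2))]
    have hB : ∑ i ∈ ExtF, (if Relation.TransGen E i u then cD i * sp i u else 0)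
        = σf u + ∑ j ∈ pF, (if E j u then cE j u * σf j else 0) := by
      have h1 : ∀ i ∈ ExtF, (if Relation.TransGen E i u then cD i * sp i u else 0)
          = (if gv i = u then cD i * sp i u else 0)
            + (if E (gv i) u then cD i * sp i (gv i) * cE (gv i) u else 0) := by
        intro i hi0
        obtain ⟨hi, hni⟩ := (hmem_Ext i).mp hi0
        rw [hgv_spec i hi]
        by_cases h2 : Relation.TransGen E i u
        · rcases hF2 i u hi huv h2 with h3 | h3
          · rw [if_pos h2, if_pos h3, if_neg (fun h4 => hdag u (Relation.TransGen.single
              (by rw [h3] at h4; exact h4)))]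
            ring
          · have h4 : gw i v hi ≠ u :=
              fun heq => hdag u (Relation.TransGen.single (by rw [heq] at h3; exact h3))
            rw [if_pos h2, if_neg h4, if_pos h3, hF3 i u hi hni huv h2 h4]
            ring
        · have h3 : ¬ (gw i v hi = u) := fun heq =>
            h2 (by rw [← heq]; exact htg_gw i v hi (hgv_ne i hi hni))
          have h4 : ¬ E (gw i v hi) u := fun h5 =>
            h2 ((htg_gw i v hi (hgv_ne i hi hni)).trans (Relation.TransGen.single h5))
          rw [if_neg h2, if_neg h3, if_neg h4]
          ring
      rw [Finset.sum_congr rfl h1, Finset.sum_add_distrib]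
      congr 1
      rw [← Finset.sum_fiberwise_of_maps_to hmaps
        (fun i => if E (gv i) u then cD i * sp i (gv i) * cE (gv i) u else 0)]
      apply Finset.sum_congr rfl
      intro j hj
      trans (∑ i ∈ Finset.filter (fun i => gv i = j) ExtF,
        if E j u then (cD i * sp i j) * cE j u else 0)
      · apply Finset.sum_congr rfl
        intro i hi0
        have hgij : gv i = j := (Finset.mem_filter.mp hi0).2
        rw [hgij]
      · by_cases h3 : E j u
        · simp only [if_pos h3]
          rw [← Finset.sum_mul, Finset.sum_filter, mul_comm]
        · simp only [if_neg h3, Finset.sum_const_zero]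
    rw [hA, hB] at h0
    have hC : ∑ j ∈ pF, (if E j u then cD j * cE j u else 0)
        + ∑ j ∈ pF, (if E j u then cE j u * σf j else 0)
        = ∑ j ∈ pF, (if E j u then cE j u * T j else 0) := by
      rw [← Finset.sum_add_distrib]
      apply Finset.sum_congr rfl
      intro j _
      by_cases h3 : E j u
      · simp only [if_pos h3]
        rw [hTdef]
        ring
      · simp only [if_neg h3]
        ring
    rw [hTdef]
    show cD u + σf u = _
    rw [h0, ← hC]
    ring
    -- R3 : recursion for the alternating path sums
  have hR3 : ∀ u, E u v →
      cE u v = F u + ∑ x ∈ pF, (if E u x then cE u x * F x else 0) := by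
    intro u huv
    have hPu : P u = insert [u, v]
        ((pF.filter (fun x => E u x)).biUnion (fun x => (P x).image (fun r => u :: r))) := by
      ext l
      constructor
      · intro hl
        have hd := (hP u l).mp hl
        have hlen2 : 2 ≤ l.length := by
          by_contra h4
          push_neg at h4
          exact edge_ne hdag huv (dirseq_single hd h4).1
        rcases eq_or_lt_of_le hlen2 with h2 | h3
        · rw [dirseq_length_two hd h2.symm]
          exact Finset.mem_insert_self _ _
        · -- length ≥ 3
          obtain ⟨a0, r, rfl⟩ : ∃ a0 r, l = a0 :: r := by
            rcases l with _ | ⟨a0, r⟩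
            · simp at hlen2
            · exact ⟨a0, r, rfl⟩
          obtain rfl : u = a0 := by
            have h9 := hd.2.1
            simpa using (Option.some.inj h9).symm
          obtain ⟨x, r'', rfl⟩ : ∃ x r'', r = x :: r'' := by
            rcases r with _ | ⟨x, r''⟩
            · simp at h3
            · exact ⟨x, r'', rfl⟩
          have hsuf : IsDirSeq E x v (x :: r'') :=
            dirseq_suffix (l1 := [u]) (by exact hd)
          have hEux : E u x := (List.isChain_cons_cons.mp hd.1).1
          have hr'' : r'' ≠ [] := by
            rintro rfl
            simp at h3
          have htgxv : Relation.TransGen E x v := by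
            apply dirseq_transGen hsuf
            have := List.length_pos_iff.mpr hr''
            simp only [List.length_cons]
            omega
          have hxv : x ≠ v := tg_ne hdag htgxv
          have hExv : E x v := by
            have hclq := clique_of_dirseq hdag hbg hd ((adj_of_edge hdag huv).symm)
            rcases hclq x (by simp) v (dirseq_last_mem hd) with heq | hadj
            · exact absurd heq hxv
            · exact edge_of_adj_tg hdag hadj htgxv
          apply Finset.mem_insert_of_mem
          apply Finset.mem_biUnion.mpr
          refine ⟨x, ?_, ?_⟩
          · rw [Finset.mem_filter]
            exact ⟨(hmem_pF x).mpr hExv, hEux⟩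
          · exact Finset.mem_image.mpr ⟨x :: r'', (hP x _).mpr hsuf, rfl⟩
      · intro hl
        rcases Finset.mem_insert.mp hl with rfl | hbi
        · exact (hP u _).mpr (dirseq_edge huv)
        · obtain ⟨x, hx, hlim⟩ := Finset.mem_biUnion.mp hbi
          obtain ⟨r, hr, rfl⟩ := Finset.mem_image.mp hlim
          have hxf : E u x := (Finset.mem_filter.mp hx).2
          have hrd := (hP x r).mp hr
          apply (hP u _).mpr
          refine ⟨?_, rfl, ?_⟩
          · apply List.isChain_cons.mpr
            refine ⟨?_, hrd.1⟩
            intro y hy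
            rw [hrd.2.1] at hy
            simp only [Option.mem_def, Option.some.injEq] at hy
            subst hy
            exact hxf
          · have hrne : r ≠ [] := dirseq_ne_nil hrd
            rcases r with _ | ⟨a, r2⟩
            · exact absurd rfl hrne
            · rw [List.getLast?_cons_cons]
              exact hrd.2.2
    have hnotin : [u, v] ∉ (pF.filter (fun x => E u x)).biUnion
        (fun x => (P x).image (fun r => u :: r)) := by
      intro h
      obtain ⟨x, hx, hlim⟩ := Finset.mem_biUnion.mp h
      obtain ⟨r, hr, heq⟩ := Finset.mem_image.mp hlim
      have hrd := (hP x r).mp hr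
      have : r = [v] := by
        have := congrArg List.tail heq
        simpa using this
      subst this
      have hxv : v = x := by
        have h9 := hrd.2.1
        simpa using h9
      have hExv : E x v := (hmem_pF x).mp (Finset.mem_filter.mp hx).1
      exact edge_ne hdag hExv hxv.symm
    have hdisj : ∀ x ∈ pF.filter (fun x => E u x), ∀ y ∈ pF.filter (fun x => E u x),
        x ≠ y → Disjoint ((P x).image (fun r => u :: r)) ((P y).image (fun r => u :: r)) := by
      intro x hx y hy hxy
      rw [Finset.disjoint_left]
      intro l hl1 hl2
      obtain ⟨r, hr, heq⟩ := Finset.mem_image.mp hl1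
      obtain ⟨r', hr', heq'⟩ := Finset.mem_image.mp hl2
      have : r = r' := by
        have := heq.trans heq'.symm
        simpa using this
      subst this
      have h1 := ((hP x r).mp hr).2.1
      have h2 := ((hP y r).mp hr').2.1
      rw [h1] at h2
      exact hxy (Option.some.inj h2)
    have hFu : F u = cE u v
        + ∑ x ∈ pF.filter (fun x => E u x), (- (cE u x * F x)) := by
      rw [hFdef]
      show ∑ l ∈ P u, (-1 : ℝ) ^ l.length * prodAlong cE l = _
      rw [hPu, Finset.sum_insert hnotin, Finset.sum_biUnion hdisj]
      congr 1
      · norm_num [prodAlong]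
      · apply Finset.sum_congr rfl
        intro x hx
        rw [Finset.sum_image (by intro a _ b _ h; simpa using h)]
        have h5 : ∀ r ∈ P x, (-1 : ℝ) ^ (u :: r).length * prodAlong cE (u :: r)
            = - (cE u x * ((-1 : ℝ) ^ r.length * prodAlong cE r)) := by
          intro r hr
          have hrd := (hP x r).mp hr
          obtain ⟨a0, r2, rfl⟩ : ∃ a0 r2, r = a0 :: r2 := by
            rcases r with _ | ⟨a0, r2⟩
            · exact absurd rfl (dirseq_ne_nil hrd)
            · exact ⟨a0, r2, rfl⟩
          obtain rfl : x = a0 := by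
            have h9 := hrd.2.1
            simpa using (Option.some.inj h9).symm
          rw [prodAlong_cons_cons]
          simp only [List.length_cons]
          ring
        rw [Finset.sum_congr rfl h5, Finset.sum_neg_distrib, ← Finset.mul_sum]
    rw [hFu, Finset.sum_filter]
    have : ∑ x ∈ pF, (if E u x then -(cE u x * F x) else 0)
        = - ∑ x ∈ pF, (if E u x then cE u x * F x else 0) := by
      rw [← Finset.sum_neg_distrib]
      apply Finset.sum_congr rfl
      intro x _
      by_cases h3 : E u x <;> simp [h3]
    rw [this]
    ring
    -- ======== finale ========
  have key : ∑ u ∈ pF, F u = ∑ u ∈ pF, cE u v * T u := by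
    have lhs : ∑ u ∈ pF, F u
        = ∑ u ∈ pF, F u * T u
          + ∑ u ∈ pF, ∑ j ∈ pF, (if E j u then cE j u * T j * F u else 0) := by
      rw [← Finset.sum_add_distrib]
      apply Finset.sum_congr rfl
      intro u hu
      have huv := (hmem_pF u).mp hu
      have h1 : T u + ∑ j ∈ pF, (if E j u then cE j u * T j else 0) = 1 := by
        rw [hR1 u huv]; ring
      calc F u = F u * (T u + ∑ j ∈ pF, (if E j u then cE j u * T j else 0)) := by
            rw [h1, mul_one]
        _ = F u * T u + ∑ j ∈ pF, (if E j u then cE j u * T j * F u else 0) := by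
            rw [mul_add]
            congr 1
            rw [Finset.mul_sum]
            apply Finset.sum_congr rfl
            intro j _
            by_cases h3 : E j u
            · simp only [if_pos h3]; ring
            · simp only [if_neg h3, mul_zero]
    have rhs : ∑ u ∈ pF, cE u v * T u
        = ∑ u ∈ pF, F u * T u
          + ∑ u ∈ pF, ∑ x ∈ pF, (if E u x then cE u x * F x * T u else 0) := by
      rw [← Finset.sum_add_distrib]
      apply Finset.sum_congr rfl
      intro u hu
      have huv := (hmem_pF u).mp hu
      calc cE u v * T u
          = (F u + ∑ x ∈ pF, (if E u x then cE u x * F x else 0)) * T u := by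
            rw [← hR3 u huv]
        _ = F u * T u + ∑ x ∈ pF, (if E u x then cE u x * F x * T u else 0) := by
            rw [add_mul]
            congr 1
            rw [Finset.sum_mul]
            apply Finset.sum_congr rfl
            intro x _
            by_cases h3 : E u x
            · simp only [if_pos h3]
            · simp only [if_neg h3, zero_mul]
    rw [lhs, rhs]
    congr 1
    rw [Finset.sum_comm]
    apply Finset.sum_congr rfl
    intro a _
    apply Finset.sum_congr rfl
    intro b _
    by_cases h3 : E a b
    · simp only [if_pos h3]; ring
    · simp only [if_neg h3]
  have h1 : ∑ u : V, (if E u v then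
      ∑ l ∈ P u, (-1 : ℝ) ^ (l.length - 1) * prodAlong cE l else 0)
      = ∑ u ∈ pF, ∑ l ∈ P u, (-1 : ℝ) ^ (l.length - 1) * prodAlong cE l := by
    rw [hpF, Finset.sum_filter]
  have h2 : ∑ u ∈ pF, ∑ l ∈ P u, (-1 : ℝ) ^ (l.length - 1) * prodAlong cE l
      = - ∑ u ∈ pF, F u := by
    rw [← Finset.sum_neg_distrib]
    apply Finset.sum_congr rfl
    intro u hu
    have huv := (hmem_pF u).mp hu
    have h3 : ∀ l ∈ P u, (-1 : ℝ) ^ (l.length - 1) * prodAlong cE l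
        = - ((-1 : ℝ) ^ l.length * prodAlong cE l) := by
      intro l hl
      have hd := (hP u l).mp hl
      have hl2 : 2 ≤ l.length := by
        by_contra h4
        push_neg at h4
        exact edge_ne hdag huv (dirseq_single hd h4).1
      obtain ⟨k, hk⟩ : ∃ k, l.length = k + 1 := ⟨l.length - 1, by omega⟩
      rw [hk]
      have h6 : k + 1 - 1 = k := by omega
      rw [h6, pow_succ]
      ring
    rw [Finset.sum_congr rfl h3, Finset.sum_neg_distrib]
  rw [hR2, h1, h2, key]
  ring
end

section
/- Let θ ∈ (0,1)^E be a critical edge-weight vector on a ttt (every unique shortest directed path strictly maximizes the path-weight product) with all c_{vv} = 1 - ∑_{i ∈ an(v)} c_{ii} c_{p(i,v)} > 0. Then for the max-linear coefficients b_{vi}: b_{vi} > 0 if and only if v ∈ Desc(i). Consequently the |V| coefficient vectors (b_{vi})_{v∈V}, i ∈ V, are pairwise distinct, and for each edge (i,v) ∈ E one has c_{iv} = b_{vi}/b_{ii}; hence θ is uniquely determined by the matrix (b_{vi}). -/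
open scoped Classical

universe u

variable {V : Type u}

/-- For a critical edge-weight vector on a ttt: `b_vi > 0` iff `v ∈ Desc(i)`;
the coefficient vectors `(b_vi)_v` are pairwise distinct; and for each edge
`(i,v)` one has `c_iv = b_vi / b_ii`, so `θ` is determined by the matrix `b`. -/
theorem stmt16 {V : Type u} [Fintype V] (E : V → V → Prop)
    (httt : IsTTT E)
    (cE : V → V → ℝ) (cD : V → ℝ) (sp : V → V → ℝ)
    (hce : ∀ i j, E i j → 0 < cE i j ∧ cE i j < 1)
    (hcDpos : ∀ w, 0 < cD w)
    -- `sp i w` is the weight product of the unique shortest directed path from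
    -- `i` to `w`, which strictly maximizes the path-weight product:
    (hsp : ∀ i w, Relation.TransGen E i w → ∃ l : List V, IsDirSeq E i w l ∧
      (∀ l', IsDirSeq E i w l' → l.length ≤ l'.length) ∧
      sp i w = prodAlong cE l ∧
      (∀ l', IsDirSeq E i w l' → l' ≠ l → prodAlong cE l' < prodAlong cE l))
    (hcD : ∀ w, cD w =
      1 - ∑ i : V, if Relation.TransGen E i w then cD i * sp i w else 0)
    (b : V → V → ℝ)
    (hb : ∀ v i, b v i = if v = i then cD v
      else if Relation.TransGen E i v then cD i * sp i v else 0) :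
    (∀ v i : V, 0 < b v i ↔ Relation.ReflTransGen E i v) ∧
    (∀ i j : V, i ≠ j → (fun v => b v i) ≠ (fun v => b v j)) ∧
    (∀ i v : V, E i v → cE i v = b v i / b i i) := by
  have hprod : ∀ l : List V, l.Chain' E → 0 < prodAlong cE l := by
    intro l
    induction l with
    | nil => intro _; exact one_pos
    | cons a t ih =>
      match t with
      | [] => intro _; exact one_pos
      | b :: rest =>
        intro h
        replace h := List.isChain_cons_cons.mp h
        exact mul_pos (hce a b h.1).1 (ih h.2)
  have hsp_pos : ∀ i w, Relation.TransGen E i w → 0 < sp i w := by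
    intro i w h
    obtain ⟨l, hl, _, hspl, _⟩ := hsp i w h
    rw [hspl]; exact hprod l hl.1
  have hpos : ∀ v i : V, 0 < b v i ↔ Relation.ReflTransGen E i v := by
    intro v i
    rw [hb]
    by_cases hvi : v = i
    · subst hvi
      simp only [if_pos rfl]
      exact ⟨fun _ => Relation.ReflTransGen.refl, fun _ => hcDpos v⟩
    · simp only [if_neg hvi]
      by_cases ht : Relation.TransGen E i v
      · simp only [if_pos ht]
        exact ⟨fun _ => ht.to_reflTransGen,
          fun _ => mul_pos (hcDpos i) (hsp_pos i v ht)⟩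
      · simp only [if_neg ht]
        constructor
        · intro h; exact absurd h (lt_irrefl 0)
        · intro h
          rcases Relation.reflTransGen_iff_eq_or_transGen.mp h with h' | h'
          · exact absurd h' hvi
          · exact absurd h' ht
  refine ⟨hpos, ?_, ?_⟩
  · intro i j hij hEq
    have h1 : 0 < b i j := by
      have : b i i = b i j := congrFun hEq i
      rw [← this, hb, if_pos rfl]; exact hcDpos i
    have h2 : 0 < b j i := by
      have : b j i = b j j := congrFun hEq j
      rw [this, hb, if_pos rfl]; exact hcDpos j
    have hji : Relation.ReflTransGen E j i := (hpos i j).mp h1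
    have hij' : Relation.ReflTransGen E i j := (hpos j i).mp h2
    rcases Relation.reflTransGen_iff_eq_or_transGen.mp hij' with h' | h'
    · exact hij h'.symm
    · exact httt.1 j (Relation.TransGen.trans_right hji h')
  · intro i v hiv
    have ht : Relation.TransGen E i v := Relation.TransGen.single hiv
    have hivne : v ≠ i := by
      rintro rfl; exact httt.1 v ht
    have hspv : sp i v = cE i v := by
      obtain ⟨l, hl, hmin, hspl, _⟩ := hsp i v ht
      have hseq : IsDirSeq E i v [i, v] := by
        refine ⟨?_, rfl, rfl⟩
        exact List.isChain_cons_cons.mpr ⟨hiv, List.isChain_singleton v⟩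
      have hlen : l.length ≤ 2 := hmin [i, v] hseq
      have : l = [i, v] := by
        match l, hl with
        | [], ⟨_, h2, _⟩ => simp at h2
        | [a], ⟨_, h2, h3⟩ =>
          simp only [List.head?, List.getLast?] at h2 h3
          exfalso
          have : a = i := by injection h2
          have h3' : a = v := by simpa [List.getLast?] using h3
          exact hivne (h3' ▸ this ▸ rfl)
        | a :: b :: c :: rest, ⟨_, _, _⟩ => simp at hlen
        | [a, b], ⟨_, h2, h3⟩ =>
          have ha : a = i := by simpa using h2
          have hb' : b = v := by simpa [List.getLast?] using h3
          rw [ha, hb']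
      rw [hspl, this]
      simp [prodAlong]
    rw [hb v i, if_neg hivne, if_pos ht, hb i i, if_pos rfl, hspv]
    field_simp [ne_of_gt (hcDpos i)]
end
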